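/- arXiv:1409.5772 — 2 statements merged into one kernel-verified Lean document; each statement's English description precedes it below -/
import Mathlib

section
/- Let k be a field and n a natural number. A triple (x,y,z) of natural numbers is the dimension type of an indecomposable system in S(n) if and only if the reversed triple (z,y,x) is the dimension type of an indecomposable system in S(n). -/
universe u

/-- A system in `S(n)`: a finite-dimensional `k`-vector space `V`, a `k`-linear
operator `T : V → V` with `T ^ n = 0`, and `T`-invariant subspaces `U₁ ⊆ U₂ ⊆ V`. -/
structure SystemS (k : Type u) [Field k] (n : ℕ) where
  V : Type u
  [acg : AddCommGroup V]
  [mod : Module k V]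
  [fd : FiniteDimensional k V]
  T : V →ₗ[k] V
  nilpotent : T ^ n = 0
  U₁ : Submodule k V
  U₂ : Submodule k V
  le12 : U₁ ≤ U₂
  inv1 : Submodule.map T U₁ ≤ U₁
  inv2 : Submodule.map T U₂ ≤ U₂

attribute [instance] SystemS.acg SystemS.mod SystemS.fd

namespace SystemS

variable {k : Type u} [Field k] {n : ℕ}

/-- `f` is an endomorphism of the system `M`: it commutes with the operator and
preserves both invariant subspaces. -/
def IsEndo (M : SystemS k n) (f : M.V →ₗ[k] M.V) : Prop :=
  f ∘ₗ M.T = M.T ∘ₗ f ∧ Submodule.map f M.U₁ ≤ M.U₁ ∧ Submodule.map f M.U₂ ≤ M.U₂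

/-- A system is indecomposable if `V ≠ 0` and its only idempotent endomorphisms
are `0` and the identity. -/
def Indecomposable (M : SystemS k n) : Prop :=
  Nontrivial M.V ∧
    ∀ f : M.V →ₗ[k] M.V, M.IsEndo f → f ∘ₗ f = f → f = 0 ∨ f = LinearMap.id

/-- The dimension type `(dim U₁, dim U₂/U₁, dim V/U₂)` of a system. -/
noncomputable def dimType (M : SystemS k n) : ℕ × ℕ × ℕ :=
  (Module.finrank k M.U₁,
   Module.finrank k (M.U₂ ⧸ Submodule.comap M.U₂.subtype M.U₁),
   Module.finrank k (M.V ⧸ M.U₂))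

/-- Two systems are isomorphic if there is a `k`-linear equivalence of the ambient
spaces commuting with the operators and identifying the respective subspaces. -/
def Iso (M N : SystemS k n) : Prop :=
  ∃ f : M.V ≃ₗ[k] N.V,
    (f : M.V →ₗ[k] N.V) ∘ₗ M.T = N.T ∘ₗ (f : M.V →ₗ[k] N.V) ∧
    Submodule.map (f : M.V →ₗ[k] N.V) M.U₁ = N.U₁ ∧
    Submodule.map (f : M.V →ₗ[k] N.V) M.U₂ = N.U₂

end SystemS

/-- `d` is the dimension type of an indecomposable system in `S(n)`. -/
def IsIndecDimType (k : Type u) [Field k] (n : ℕ) (d : ℕ × ℕ × ℕ) : Prop :=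
  ∃ M : SystemS k n, M.Indecomposable ∧ M.dimType = d

open Module LinearMap

section aux

variable {k : Type u} [Field k] {V : Type u} [AddCommGroup V] [Module k V]

lemma dualMap_pow_aux (T : V →ₗ[k] V) (m : ℕ) : (T ^ m).dualMap = T.dualMap ^ m := by
  induction m with
  | zero => simp [pow_zero, Module.End.one_eq_id, LinearMap.dualMap_id]
  | succ m ih =>
      rw [pow_succ, Module.End.mul_eq_comp, ← LinearMap.dualMap_comp_dualMap, ih,
        pow_succ', Module.End.mul_eq_comp]

lemma finrank_dualAnnihilator_aux [FiniteDimensional k V] (W : Submodule k V) :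
    finrank k W.dualAnnihilator = finrank k V - finrank k W := by
  have h1 : finrank k (V ⧸ W) = finrank k W.dualAnnihilator :=
    (Subspace.quotEquivAnnihilator W).finrank_eq
  have h2 : finrank k (V ⧸ W) + finrank k W = finrank k V :=
    Submodule.finrank_quotient_add_finrank W
  omega

lemma finrank_quot_comap_aux [FiniteDimensional k V] {W₁ W₂ : Submodule k V} (h : W₁ ≤ W₂) :
    finrank k (W₂ ⧸ Submodule.comap W₂.subtype W₁) = finrank k W₂ - finrank k W₁ := by
  have h1 : finrank k (Submodule.comap W₂.subtype W₁) = finrank k W₁ :=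
    (Submodule.comapSubtypeEquivOfLe h).finrank_eq
  have h2 : finrank k (W₂ ⧸ Submodule.comap W₂.subtype W₁)
      + finrank k (Submodule.comap W₂.subtype W₁) = finrank k W₂ :=
    Submodule.finrank_quotient_add_finrank _
  omega

end aux

namespace SystemS

variable {k : Type u} [Field k] {n : ℕ}

/-- The dual system. -/
noncomputable def dualSystem (M : SystemS k n) : SystemS k n where
  V := Module.Dual k M.V
  T := M.T.dualMap
  nilpotent := by rw [← dualMap_pow_aux, M.nilpotent]; ext φ v; simp
  U₁ := M.U₂.dualAnnihilator
  U₂ := M.U₁.dualAnnihilator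
  le12 := Submodule.dualAnnihilator_anti M.le12
  inv1 := by
    rintro _ ⟨φ, hφ, rfl⟩
    simp only [SetLike.mem_coe, Submodule.mem_dualAnnihilator] at hφ
    refine (Submodule.mem_dualAnnihilator _).mpr fun w hw => ?_
    rw [LinearMap.dualMap_apply]
    exact hφ _ (M.inv2 ⟨w, hw, rfl⟩)
  inv2 := by
    rintro _ ⟨φ, hφ, rfl⟩
    simp only [SetLike.mem_coe, Submodule.mem_dualAnnihilator] at hφ
    refine (Submodule.mem_dualAnnihilator _).mpr fun w hw => ?_
    rw [LinearMap.dualMap_apply]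
    exact hφ _ (M.inv1 ⟨w, hw, rfl⟩)

lemma indec_transfer (M : SystemS k n) (hM : M.Indecomposable)
    (f : Module.Dual k M.V →ₗ[k] Module.Dual k M.V)
    (hfT : f ∘ₗ M.T.dualMap = M.T.dualMap ∘ₗ f)
    (hf1 : Submodule.map f M.U₂.dualAnnihilator ≤ M.U₂.dualAnnihilator)
    (hf2 : Submodule.map f M.U₁.dualAnnihilator ≤ M.U₁.dualAnnihilator)
    (hff : f ∘ₗ f = f) : f = 0 ∨ f = LinearMap.id := by
  obtain ⟨hnt, hidem⟩ := hM
  set e := Module.evalEquiv k M.V with he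
  set g : M.V →ₗ[k] M.V :=
    e.symm.toLinearMap ∘ₗ f.dualMap ∘ₗ e.toLinearMap with hg
  have key : ∀ (φ : Module.Dual k M.V) (v : M.V), φ (g v) = f φ v := by
    intro φ v
    simp only [hg, LinearMap.comp_apply, LinearEquiv.coe_coe]
    rw [Module.apply_evalEquiv_symm_apply, LinearMap.dualMap_apply, he,
      Module.evalEquiv_apply, Module.Dual.eval_apply]
  have hginj : ∀ u v : M.V, (∀ φ : Module.Dual k M.V, φ u = φ v) → u = v := by
    intro u v h
    have h0 : ∀ φ : Module.Dual k M.V, φ (u - v) = 0 := by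
      intro φ; rw [map_sub, h φ, sub_self]
    exact sub_eq_zero.mp ((Module.forall_dual_apply_eq_zero_iff k (u - v)).mp h0)
  have hgendo : M.IsEndo g := by
    refine ⟨?_, ?_, ?_⟩
    · apply LinearMap.ext; intro v
      apply hginj
      intro φ
      simp only [LinearMap.comp_apply]
      rw [key φ (M.T v)]
      have h1 : φ (M.T (g v)) = (M.T.dualMap φ) (g v) := rfl
      rw [h1, key (M.T.dualMap φ) v]
      have h2 : f (M.T.dualMap φ) = M.T.dualMap (f φ) := by
        have := congrArg (fun h => h φ) hfT
        simpa using this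
      rw [h2, LinearMap.dualMap_apply]
    · rintro _ ⟨v, hv, rfl⟩
      rw [← Subspace.forall_mem_dualAnnihilator_apply_eq_zero_iff M.U₁ (g v)]
      intro φ hφ
      rw [key]
      have hmem : f φ ∈ M.U₁.dualAnnihilator := hf2 ⟨φ, hφ, rfl⟩
      exact (Submodule.mem_dualAnnihilator _).mp hmem v hv
    · rintro _ ⟨v, hv, rfl⟩
      rw [← Subspace.forall_mem_dualAnnihilator_apply_eq_zero_iff M.U₂ (g v)]
      intro φ hφ
      rw [key]
      have hmem : f φ ∈ M.U₂.dualAnnihilator := hf1 ⟨φ, hφ, rfl⟩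
      exact (Submodule.mem_dualAnnihilator _).mp hmem v hv
  have hgg : g ∘ₗ g = g := by
    apply LinearMap.ext; intro v
    apply hginj
    intro φ
    simp only [LinearMap.comp_apply]
    rw [key φ (g v), key φ v, key (f φ) v]
    have := congrArg (fun h => h φ v) hff
    simpa using this
  rcases hidem g hgendo hgg with h0 | hid
  · left
    apply LinearMap.ext; intro φ; apply LinearMap.ext; intro v
    have hk := key φ v
    rw [h0] at hk
    simpa using hk.symm
  · right
    apply LinearMap.ext; intro φ; apply LinearMap.ext; intro v
    have hk := key φ v
    rw [hid] at hk
    simpa using hk.symm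

lemma dualSystem_indec (M : SystemS k n) (hM : M.Indecomposable) :
    M.dualSystem.Indecomposable := by
  constructor
  · haveI := hM.1
    have h1 : 0 < finrank k M.V := Module.finrank_pos
    have h2 : finrank k (Module.Dual k M.V) = finrank k M.V :=
      Subspace.dual_finrank_eq
    exact Module.nontrivial_of_finrank_pos (R := k) (M := Module.Dual k M.V)
      (h2 ▸ h1)
  · intro f hf hff
    exact M.indec_transfer hM f hf.1 hf.2.1 hf.2.2 hff

lemma dualSystem_dimType (M : SystemS k n) {x y z : ℕ} (h : M.dimType = (x, y, z)) :
    M.dualSystem.dimType = (z, y, x) := by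
  have hx : finrank k M.U₁ = x := congrArg Prod.fst h
  have hy : finrank k (M.U₂ ⧸ Submodule.comap M.U₂.subtype M.U₁) = y :=
    congrArg (Prod.fst ∘ Prod.snd) h
  have hz : finrank k (M.V ⧸ M.U₂) = z := congrArg (Prod.snd ∘ Prod.snd) h
  have hmid : finrank k M.U₂ - finrank k M.U₁ = y := by
    rw [← hy, finrank_quot_comap_aux M.le12]
  have hquot : finrank k (M.V ⧸ M.U₂) + finrank k M.U₂ = finrank k M.V :=
    Submodule.finrank_quotient_add_finrank _
  have h12 : finrank k M.U₁ ≤ finrank k M.U₂ :=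
    Submodule.finrank_mono M.le12
  have hU2 : finrank k M.U₂ = x + y := by omega
  have hV : finrank k M.V = x + y + z := by omega
  have hdual : finrank k (Module.Dual k M.V) = x + y + z := by
    rw [Subspace.dual_finrank_eq]; exact hV
  have ha1 : finrank k M.U₂.dualAnnihilator = z := by
    rw [finrank_dualAnnihilator_aux, hU2, hV]; omega
  have ha2 : finrank k M.U₁.dualAnnihilator = y + z := by
    rw [finrank_dualAnnihilator_aux, hx, hV]; omega
  have hle : (M.U₂.dualAnnihilator : Submodule k (Module.Dual k M.V))
      ≤ M.U₁.dualAnnihilator := Submodule.dualAnnihilator_anti M.le12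
  have h2 : finrank k (Module.Dual k M.V ⧸ (M.U₁.dualAnnihilator))
      + finrank k M.U₁.dualAnnihilator = finrank k (Module.Dual k M.V) :=
    Submodule.finrank_quotient_add_finrank _
  have hq : finrank k (Module.Dual k M.V ⧸ (M.U₁.dualAnnihilator)) = x := by omega
  simp only [dimType, dualSystem, Prod.mk.injEq]
  refine ⟨ha1, ?_, hq⟩
  exact (finrank_quot_comap_aux hle).trans (by rw [ha1, ha2]; omega)

end SystemS

/-- For every `n`, a triple `(x,y,z)` is the dimension type of an indecomposable system
in `S(n)` iff the reversed triple `(z,y,x)` is. -/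
theorem dimType_reflection (k : Type u) [Field k] (n x y z : ℕ) :
    IsIndecDimType k n (x, y, z) ↔ IsIndecDimType k n (z, y, x) := by
  constructor <;> rintro ⟨M, hM, hd⟩ <;>
    exact ⟨M.dualSystem, M.dualSystem_indec hM, M.dualSystem_dimType hd⟩
end

section
/- Let k be a field. Neither (2,1,2) nor (1,2,1) is the dimension type of an indecomposable system in S(3). -/
universe u

open Submodule Module Set

section Helpers

variable {k : Type u} [Field k] {V : Type u} [AddCommGroup V] [Module k V]

/-- Linear independence via a flag of subspaces. -/
lemma li_flag {m : ℕ} (v : Fin m → V) (W : Fin m → Submodule k V)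
    (hmem : ∀ i j : Fin m, i < j → v i ∈ W j)
    (hnot : ∀ j, v j ∉ W j) : LinearIndependent k v := by
  rw [linearIndependent_iff']
  intro s g hsum i hi
  by_contra hgi
  classical
  set t := s.filter (fun i => g i ≠ 0) with ht
  have hit : i ∈ t := Finset.mem_filter.2 ⟨hi, hgi⟩
  have htne : t.Nonempty := ⟨i, hit⟩
  set j := t.max' htne with hj
  have hjt : j ∈ t := t.max'_mem htne
  have hjs : j ∈ s := (Finset.mem_filter.1 hjt).1
  have hgj : g j ≠ 0 := (Finset.mem_filter.1 hjt).2
  have hsum' : g j • v j + ∑ l ∈ s.erase j, g l • v l = 0 := by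
    rw [Finset.add_sum_erase _ (fun l => g l • v l) hjs]; exact hsum
  have hmemsum : ∑ l ∈ s.erase j, g l • v l ∈ W j := by
    apply Submodule.sum_mem
    intro l hl
    rcases eq_or_ne (g l) 0 with h0 | h0
    · simp [h0]
    · have hlt : l ∈ t := Finset.mem_filter.2 ⟨Finset.mem_of_mem_erase hl, h0⟩
      have hle : l ≤ j := t.le_max' l hlt
      have hne : l ≠ j := Finset.ne_of_mem_erase hl
      exact Submodule.smul_mem _ _ (hmem l j (lt_of_le_of_ne hle hne))
  have : g j • v j ∈ W j := by
    have := (W j).neg_mem hmemsum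
    have heq : g j • v j = -(∑ l ∈ s.erase j, g l • v l) := by
      linear_combination (norm := module) hsum'
    rwa [heq]
  exact hnot j ((Submodule.smul_mem_iff _ hgj).1 this)

lemma span_range_eq_of_finrank [FiniteDimensional k V] {m : ℕ} (v : Fin m → V)
    (hli : LinearIndependent k v) (U : Submodule k V)
    (hle : ∀ i, v i ∈ U) (hrank : finrank k U ≤ m) :
    U = span k (Set.range v) := by
  have h1 : span k (Set.range v) ≤ U := by
    rw [span_le]; rintro y ⟨i, rfl⟩; exact hle i
  have h2 : finrank k (span k (Set.range v)) = m := by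
    rw [finrank_span_eq_card hli, Fintype.card_fin]
  exact (Submodule.eq_of_le_of_finrank_le h1 (by rw [h2]; exact hrank)).symm

lemma eq_span_singleton [FiniteDimensional k V] {g : V} (U : Submodule k V)
    (hg : g ∈ U) (hg0 : g ≠ 0) (hrank : finrank k U ≤ 1) : U = span k {g} := by
  have h1 : span k {g} ≤ U := by rw [span_le, Set.singleton_subset_iff]; exact hg
  exact (Submodule.eq_of_le_of_finrank_le h1 (by rw [finrank_span_singleton hg0]; exact hrank)).symm

lemma exists_not_mem_of_finrank_lt [FiniteDimensional k V] (U : Submodule k V)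
    (h : finrank k U < finrank k V) : ∃ x, x ∉ U := by
  by_contra h'
  push_neg at h'
  have : U = ⊤ := by
    apply Submodule.eq_top_iff'.2 h'
  rw [this, finrank_top] at h
  exact lt_irrefl _ h

lemma exists_mem_not_mem_of_finrank_lt [FiniteDimensional k V] (U W : Submodule k V)
    (h : finrank k W < finrank k U) : ∃ x ∈ U, x ∉ W := by
  rw [← SetLike.not_le_iff_exists]
  intro hle
  exact absurd (Submodule.finrank_mono hle) (not_le.2 h)

lemma finrank_le_map_add_ker [FiniteDimensional k V] (T : V →ₗ[k] V) (W : Submodule k V) :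
    finrank k W ≤ finrank k (Submodule.map T W) + finrank k (LinearMap.ker T) := by
  have h := LinearMap.finrank_range_add_finrank_ker (T.domRestrict W)
  have hr : LinearMap.range (T.domRestrict W) = Submodule.map T W := by
    ext x
    constructor
    · rintro ⟨⟨y, hy⟩, rfl⟩; exact ⟨y, hy, rfl⟩
    · rintro ⟨y, hy, rfl⟩; exact ⟨⟨y, hy⟩, rfl⟩
  have hk : finrank k (LinearMap.ker (T.domRestrict W)) ≤ finrank k (LinearMap.ker T) := by
    apply LinearMap.finrank_le_finrank_of_injective
      (f := LinearMap.codRestrict (LinearMap.ker T)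
        ((W.subtype).comp (Submodule.subtype _)) ?_)
    · intro a b hab
      have h1 := congrArg Subtype.val hab
      exact Subtype.ext (Subtype.ext h1)
    · rintro ⟨⟨c, hcW⟩, hc⟩
      simpa [LinearMap.mem_ker, LinearMap.domRestrict_apply] using hc
  rw [hr] at h
  omega
end Helpers

section Master

variable {k : Type u} [Field k] {n : ℕ}

lemma not_indec_of_split (M : SystemS k n) (p q : Submodule k M.V)
    (hc : IsCompl p q) (hTp : ∀ x ∈ p, M.T x ∈ p) (hTq : ∀ x ∈ q, M.T x ∈ q)
    (h1 : M.U₁ ≤ (M.U₁ ⊓ p) ⊔ (M.U₁ ⊓ q)) (h2 : M.U₂ ≤ (M.U₂ ⊓ p) ⊔ (M.U₂ ⊓ q))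
    (hp : p ≠ ⊥) (hq : q ≠ ⊥) : ¬ M.Indecomposable := by
  rintro ⟨-, hidem⟩
  set e : M.V →ₗ[k] M.V := p.subtype ∘ₗ p.projectionOnto q hc with he
  have he_p : ∀ x ∈ p, e x = x := by
    intro x hx
    simp only [he, LinearMap.comp_apply, Submodule.subtype_apply]
    rw [Submodule.projectionOnto_apply_left hc ⟨x, hx⟩]
  have he_q : ∀ x ∈ q, e x = 0 := by
    intro x hx
    simp only [he, LinearMap.comp_apply, Submodule.subtype_apply]
    rw [Submodule.projectionOnto_apply_right hc ⟨x, hx⟩]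
    rfl
  have hsplit : ∀ w : M.V, ∃ a ∈ p, ∃ b ∈ q, a + b = w := by
    intro w
    have : w ∈ p ⊔ q := by rw [hc.sup_eq_top]; trivial
    exact Submodule.mem_sup.1 this
  have hmem_e : ∀ w : M.V, e w ∈ p := by
    intro w; simp only [he, LinearMap.comp_apply, Submodule.subtype_apply]; exact (p.projectionOnto q hc w).2
  have hcomm : e ∘ₗ M.T = M.T ∘ₗ e := by
    ext w
    obtain ⟨a, ha, b, hb, rfl⟩ := hsplit w
    simp only [LinearMap.comp_apply, map_add]
    rw [he_p a ha, he_q b hb, he_p _ (hTp a ha), he_q _ (hTq b hb)]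
    simp
  have hU1 : Submodule.map e M.U₁ ≤ M.U₁ := by
    rintro y ⟨u, hu, rfl⟩
    obtain ⟨a, ha, b, hb, rfl⟩ := Submodule.mem_sup.1 (h1 hu)
    rw [map_add, he_p a ha.2, he_q b hb.2, add_zero]
    exact ha.1
  have hU2 : Submodule.map e M.U₂ ≤ M.U₂ := by
    rintro y ⟨u, hu, rfl⟩
    obtain ⟨a, ha, b, hb, rfl⟩ := Submodule.mem_sup.1 (h2 hu)
    rw [map_add, he_p a ha.2, he_q b hb.2, add_zero]
    exact ha.1
  have hee : e ∘ₗ e = e := by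
    ext w
    simp only [LinearMap.comp_apply]
    exact he_p _ (hmem_e w)
  rcases hidem e ⟨hcomm, hU1, hU2⟩ hee with h0 | hid
  · obtain ⟨a, ha, ha0⟩ := Submodule.exists_mem_ne_zero_of_ne_bot hp
    have := he_p a ha
    rw [h0] at this
    exact ha0 (by simpa using this.symm)
  · obtain ⟨b, hb, hb0⟩ := Submodule.exists_mem_ne_zero_of_ne_bot hq
    have := he_q b hb
    rw [hid] at this
    exact hb0 (by simpa using this)

lemma master (M : SystemS k n) {m : ℕ} (v : Fin m → M.V)
    (hli : LinearIndependent k v)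
    (hrk : finrank k M.V = m)
    (S A₁ A₂ : Set (Fin m))
    (hS : S.Nonempty) (hSc : Sᶜ.Nonempty)
    (hTS : ∀ i ∈ S, M.T (v i) ∈ span k (v '' S))
    (hTSc : ∀ i ∈ Sᶜ, M.T (v i) ∈ span k (v '' Sᶜ))
    (hU1 : M.U₁ = span k (v '' A₁))
    (hU2 : M.U₂ = span k (v '' A₂)) :
    ¬ M.Indecomposable := by
  have htop : span k (Set.range v) = ⊤ := by
    apply Submodule.eq_top_of_finrank_eq
    rw [finrank_span_eq_card hli, Fintype.card_fin, hrk]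
  set p := span k (v '' S) with hp
  set q := span k (v '' Sᶜ) with hq
  have hcompl : IsCompl p q := by
    constructor
    · exact hli.disjoint_span_image disjoint_compl_right
    · rw [codisjoint_iff, hp, hq, ← Submodule.span_union, ← Set.image_union,
        Set.union_compl_self, Set.image_univ, htop]
  have hinv : ∀ (s : Set (Fin m)), (∀ i ∈ s, M.T (v i) ∈ span k (v '' s)) →
      ∀ x ∈ span k (v '' s), M.T x ∈ span k (v '' s) := by
    intro s hs x hx
    have : Submodule.map M.T (span k (v '' s)) ≤ span k (v '' s) := by
      rw [Submodule.map_span_le]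
      rintro y ⟨i, hi, rfl⟩
      exact hs i hi
    exact this ⟨x, hx, rfl⟩
  have hsplitU : ∀ (A : Set (Fin m)) (U : Submodule k M.V), U = span k (v '' A) →
      U ≤ (U ⊓ p) ⊔ (U ⊓ q) := by
    intro A U hU
    conv_lhs => rw [hU]
    have : v '' A = v '' (A ∩ S) ∪ v '' (A ∩ Sᶜ) := by
      rw [← Set.image_union, ← Set.inter_union_distrib_left, Set.union_compl_self, Set.inter_univ]
    rw [this, Submodule.span_union]
    apply sup_le_sup
    · apply Submodule.span_le.2
      rintro y ⟨i, hi, rfl⟩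
      exact ⟨hU ▸ Submodule.subset_span ⟨i, hi.1, rfl⟩,
        Submodule.subset_span ⟨i, hi.2, rfl⟩⟩
    · apply Submodule.span_le.2
      rintro y ⟨i, hi, rfl⟩
      exact ⟨hU ▸ Submodule.subset_span ⟨i, hi.1, rfl⟩,
        Submodule.subset_span ⟨i, hi.2, rfl⟩⟩
  apply not_indec_of_split M p q hcompl (hinv S hTS) (hinv Sᶜ hTSc)
    (hsplitU A₁ M.U₁ hU1) (hsplitU A₂ M.U₂ hU2)
  · obtain ⟨i, hi⟩ := hS
    intro hbot
    have : v i ∈ p := Submodule.subset_span ⟨i, hi, rfl⟩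
    rw [hbot] at this
    exact hli.ne_zero i (by simpa using this)
  · obtain ⟨i, hi⟩ := hSc
    intro hbot
    have : v i ∈ q := Submodule.subset_span ⟨i, hi, rfl⟩
    rw [hbot] at this
    exact hli.ne_zero i (by simpa using this)

end Master

section Leaves

variable {k : Type u} [Field k] {V : Type u} [AddCommGroup V] [Module k V]

lemma li2 (a b : V) (Wa Wb : Submodule k V) (hab : a ∈ Wb)
    (ha : a ∉ Wa) (hb : b ∉ Wb) : LinearIndependent k ![a, b] := by
  apply li_flag ![a,b] ![Wa,Wb]
  · intro i j hij; fin_cases i <;> fin_cases j <;> simp_all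
  · intro j; fin_cases j <;> simpa

lemma li3 (a b c : V) (Wa Wb Wc : Submodule k V)
    (hab : a ∈ Wb) (hac : a ∈ Wc) (hbc : b ∈ Wc)
    (ha : a ∉ Wa) (hb : b ∉ Wb) (hc : c ∉ Wc) : LinearIndependent k ![a, b, c] := by
  apply li_flag ![a,b,c] ![Wa,Wb,Wc]
  · intro i j hij; fin_cases i <;> fin_cases j <;> simp_all
  · intro j; fin_cases j <;> simpa

lemma li4 (a b c d : V) (Wa Wb Wc Wd : Submodule k V)
    (hab : a ∈ Wb) (hac : a ∈ Wc) (had : a ∈ Wd) (hbc : b ∈ Wc) (hbd : b ∈ Wd) (hcd : c ∈ Wd)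
    (ha : a ∉ Wa) (hb : b ∉ Wb) (hc : c ∉ Wc) (hd : d ∉ Wd) :
    LinearIndependent k ![a, b, c, d] := by
  apply li_flag ![a,b,c,d] ![Wa,Wb,Wc,Wd]
  · intro i j hij; fin_cases i <;> fin_cases j <;> simp_all
  · intro j; fin_cases j <;> simpa

lemma li5 (a b c d e : V) (Wa Wb Wc Wd We : Submodule k V)
    (hab : a ∈ Wb) (hac : a ∈ Wc) (had : a ∈ Wd) (hae : a ∈ We)
    (hbc : b ∈ Wc) (hbd : b ∈ Wd) (hbe : b ∈ We)
    (hcd : c ∈ Wd) (hce : c ∈ We) (hde : d ∈ We)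
    (ha : a ∉ Wa) (hb : b ∉ Wb) (hc : c ∉ Wc) (hd : d ∉ Wd) (he : e ∉ We) :
    LinearIndependent k ![a, b, c, d, e] := by
  apply li_flag ![a,b,c,d,e] ![Wa,Wb,Wc,Wd,We]
  · intro i j hij; fin_cases i <;> fin_cases j <;> simp_all
  · intro j; fin_cases j <;> simpa

lemma eq_span_pair [FiniteDimensional k V] {a b : V} (U : Submodule k V)
    (ha : a ∈ U) (hb : b ∈ U) (hli : LinearIndependent k ![a,b])
    (hrank : finrank k U ≤ 2) : U = span k {a, b} := by
  have h := span_range_eq_of_finrank ![a,b] hli U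
    (by intro i; fin_cases i <;> simpa) hrank
  rwa [show Set.range ![a,b] = {a,b} by
    simp [Matrix.range_cons, Matrix.range_empty]; ext x; simp; tauto] at h

lemma eq_span_triple [FiniteDimensional k V] {a b c : V} (U : Submodule k V)
    (ha : a ∈ U) (hb : b ∈ U) (hc : c ∈ U) (hli : LinearIndependent k ![a,b,c])
    (hrank : finrank k U ≤ 3) : U = span k {a, b, c} := by
  have h := span_range_eq_of_finrank ![a,b,c] hli U
    (by intro i; fin_cases i <;> simpa) hrank
  rwa [show Set.range ![a,b,c] = {a,b,c} by
    simp [Matrix.range_cons, Matrix.range_empty]; ext x; simp; tauto] at h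

lemma card_le_finrank_of_li_mem [FiniteDimensional k V] {m : ℕ} (U : Submodule k V)
    (v : Fin m → V) (hv : ∀ i, v i ∈ U) (hli : LinearIndependent k v) :
    m ≤ finrank k U := by
  let w : Fin m → U := fun i => ⟨v i, hv i⟩
  have hw : LinearIndependent k w := by
    apply LinearIndependent.of_comp U.subtype
    convert hli
    rfl
  simpa using hw.fintype_card_le_finrank

end Leaves

section Dims

variable {k : Type u} [Field k] {n : ℕ}

lemma dims (M : SystemS k n) {a b c : ℕ} (hd : M.dimType = (a, b, c)) :
    finrank k M.U₁ = a ∧ finrank k M.U₂ = a + b ∧ finrank k M.V = a + b + c := by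
  rw [SystemS.dimType, Prod.mk.injEq, Prod.mk.injEq] at hd
  obtain ⟨h1, h2, h3⟩ := hd
  have e1 : finrank k (Submodule.comap M.U₂.subtype M.U₁) = finrank k M.U₁ :=
    (Submodule.comapSubtypeEquivOfLe M.le12).finrank_eq
  have e2 := Submodule.finrank_quotient_add_finrank (Submodule.comap M.U₂.subtype M.U₁)
  have e3 := Submodule.finrank_quotient_add_finrank M.U₂
  refine ⟨h1, ?_, ?_⟩ <;> omega

lemma T3zero (M : SystemS k 3) (x : M.V) : M.T (M.T (M.T x)) = 0 := by
  have h : (M.T ^ 3) x = 0 := by rw [M.nilpotent]; rfl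
  simpa [pow_succ, Module.End.mul_apply] using h

end Dims

section MoreHelpers

variable {k : Type u} [Field k] {V : Type u} [AddCommGroup V] [Module k V]

lemma finrank_sup_span_singleton_le [FiniteDimensional k V] (W : Submodule k V) (x : V) :
    finrank k ↥(W ⊔ span k {x}) ≤ finrank k ↥W + 1 := by
  have h := Submodule.finrank_sup_add_finrank_inf_eq W (span k {x})
  have h2 : finrank k (span k {x}) ≤ 1 := by
    by_cases hx : x = 0
    · rw [hx, Submodule.span_zero_singleton, finrank_bot]; omega
    · rw [finrank_span_singleton hx]
  omega

lemma sup_span_eq_top [FiniteDimensional k V] (W : Submodule k V) (x : V)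
    (hx : x ∉ W) (hrk : finrank k W + 1 = finrank k V) :
    W ⊔ span k {x} = ⊤ := by
  apply Submodule.eq_top_of_finrank_eq
  have hlt : W < W ⊔ span k {x} := by
    apply lt_of_le_of_ne le_sup_left
    intro h
    exact hx (h ▸ Submodule.mem_sup_right (Submodule.mem_span_singleton_self x))
  have h1 := Submodule.finrank_lt_finrank_of_lt hlt
  have h2 : finrank k ↥(W ⊔ span k {x}) ≤ finrank k V := Submodule.finrank_le _
  omega

lemma two_le_finrank_ker [FiniteDimensional k V] (T : V →ₗ[k] V)
    (hT3 : ∀ x, T (T (T x)) = 0) (h4 : 4 ≤ finrank k V) :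
    2 ≤ finrank k (LinearMap.ker T) := by
  set K := finrank k (LinearMap.ker T) with hK
  have h1 := LinearMap.finrank_range_add_finrank_ker T
  have h2 := finrank_le_map_add_ker T (LinearMap.range T)
  have h3 := finrank_le_map_add_ker T (Submodule.map T (LinearMap.range T))
  have h4' : Submodule.map T (Submodule.map T (LinearMap.range T)) = ⊥ := by
    rw [Submodule.eq_bot_iff]
    rintro y ⟨y2, ⟨y1, ⟨w, rfl⟩, rfl⟩, rfl⟩
    exact hT3 w
  rw [h4', finrank_bot] at h3
  omega

lemma pair_coeffs {a b : V} (hli : LinearIndependent k ![a, b])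
    {s t : k} (h : s • a + t • b = 0) : s = 0 ∧ t = 0 := by
  have := LinearIndependent.pair_iff.1 hli s t h
  exact this

end MoreHelpers

section Half121

variable {k : Type u} [Field k]

set_option maxHeartbeats 3200000 in
lemma half121 (M : SystemS k 3) (hd : M.dimType = (1, 2, 1)) : ¬ M.Indecomposable := by
  obtain ⟨r1, r2, rV⟩ := dims M hd
  have r2' : finrank k M.U₂ = 3 := by omega
  have rV' : finrank k M.V = 4 := by omega
  have hT3 : ∀ x : M.V, M.T (M.T (M.T x)) = 0 := T3zero M
  have hU1T : ∀ u ∈ M.U₁, M.T u ∈ M.U₁ := fun u hu => M.inv1 ⟨u, hu, rfl⟩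
  have hU2T : ∀ s ∈ M.U₂, M.T s ∈ M.U₂ := fun s hs => M.inv2 ⟨s, hs, rfl⟩
  -- T kills U₁
  have hTU1 : ∀ u ∈ M.U₁, M.T u = 0 := by
    intro u hu
    by_contra hTu
    have hu0 : u ≠ 0 := by rintro rfl; simp at hTu
    have hsp : M.U₁ = span k {u} := eq_span_singleton _ hu hu0 (le_of_eq r1)
    obtain ⟨c, hc⟩ := Submodule.mem_span_singleton.1 (hsp ▸ hU1T u hu)
    have h2 : M.T (M.T u) = (c*c) • u := by rw [← hc, map_smul, ← hc, smul_smul]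
    have h3 : M.T (M.T (M.T u)) = (c*c*c) • u := by rw [h2, map_smul, ← hc, smul_smul]
    rw [hT3] at h3
    have hc0 : c = 0 := by
      have h4 : c*c*c = 0 := by
        by_contra h5
        exact hu0 (by rwa [eq_comm, smul_eq_zero_iff_right h5] at h3)
      have : c ^ 3 = 0 := by rw [pow_succ, pow_two]; exact h4
      exact pow_eq_zero_iff (by norm_num) |>.1 this
    rw [hc0, zero_smul] at hc
    exact hTu hc.symm
  -- T maps everything into U₂
  have hTV : ∀ v : M.V, M.T v ∈ M.U₂ := by
    intro v
    by_cases hv : v ∈ M.U₂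
    · exact hU2T v hv
    · have htop : M.U₂ ⊔ span k {v} = ⊤ := sup_span_eq_top _ _ hv (by omega)
      have hmem : M.T v ∈ M.U₂ ⊔ span k {v} := by rw [htop]; trivial
      obtain ⟨s, hs, z, hz, hsz⟩ := Submodule.mem_sup.1 hmem
      obtain ⟨c, rfl⟩ := Submodule.mem_span_singleton.1 hz
      have hd1 : M.T v - c • v ∈ M.U₂ := by rw [← hsz, add_sub_cancel_right]; exact hs
      have hd2 : M.T (M.T v) - (c*c) • v ∈ M.U₂ := by
        have h1 := hU2T _ hd1
        rw [map_sub, map_smul] at h1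
        have h2 := Submodule.smul_mem _ c hd1
        have he : M.T (M.T v) - (c*c) • v
            = (M.T (M.T v) - c • M.T v) + c • (M.T v - c • v) := by module
        rw [he]; exact Submodule.add_mem _ h1 h2
      have hd3 : (c*c) • M.T v ∈ M.U₂ := by
        have h1 := hU2T _ hd2
        rw [map_sub, map_smul, hT3 v] at h1
        have := Submodule.neg_mem _ h1
        simpa using this
      rcases eq_or_ne c 0 with rfl | hc0
      · simpa using hd1
      · exact (Submodule.smul_mem_iff _ (mul_ne_zero hc0 hc0)).1 hd3
  -- generator of U₁
  have hU1bot : M.U₁ ≠ ⊥ := by intro h; rw [h, finrank_bot] at r1; omega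
  obtain ⟨u, hu, hu0⟩ := Submodule.exists_mem_ne_zero_of_ne_bot hU1bot
  have hU1span : M.U₁ = span k {u} := eq_span_singleton _ hu hu0 (le_of_eq r1)
  have hTu : M.T u = 0 := hTU1 u hu
  have hu2 : u ∈ M.U₂ := M.le12 hu
  by_cases hker : LinearMap.ker M.T ≤ M.U₂
  · -- kernel inside U₂
    by_cases hx3 : ∃ x, x ∉ M.U₂ ∧ M.T (M.T x) ≠ 0
    · -- an order-3 element outside U₂
      obtain ⟨x, hx, hx2⟩ := hx3
      have hTx2U2 : M.T (M.T x) ∈ M.U₂ := hTV _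
      have hTxU2 : M.T x ∈ M.U₂ := hTV _
      have hTx2ker : M.T (M.T x) ∈ LinearMap.ker M.T := LinearMap.mem_ker.2 (hT3 x)
      have hTxker : M.T x ∉ LinearMap.ker M.T := fun h => hx2 (LinearMap.mem_ker.1 h)
      have hker2 : 2 ≤ finrank k (LinearMap.ker M.T) :=
        two_le_finrank_ker M.T hT3 (by omega)
      by_cases hu2x : u ∈ span k {M.T (M.T x)}
      · -- L2
        obtain ⟨c, hc⟩ := Submodule.mem_span_singleton.1 hu2x
        have hc0 : c ≠ 0 := by rintro rfl; rw [zero_smul] at hc; exact hu0 hc.symm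
        have hT2xU1 : M.T (M.T x) ∈ M.U₁ := by
          have : M.T (M.T x) = c⁻¹ • u := by
            rw [← hc, smul_smul, inv_mul_cancel₀ hc0, one_smul]
          rw [this]; exact Submodule.smul_mem _ _ hu
        have hU1x : M.U₁ = span k {M.T (M.T x)} :=
          eq_span_singleton _ hT2xU1 hx2 (le_of_eq r1)
        obtain ⟨d, hdker, hd⟩ := exists_mem_not_mem_of_finrank_lt
          (LinearMap.ker M.T) (span k {M.T (M.T x)})
          (by rw [finrank_span_singleton hx2]; omega)
        have hTd : M.T d = 0 := LinearMap.mem_ker.1 hdker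
        have hdU2 : d ∈ M.U₂ := hker hdker
        have hU2span : M.U₂ = span k {M.T (M.T x), d, M.T x} :=
          eq_span_triple _ hTx2U2 hdU2 hTxU2
            (li3 (M.T (M.T x)) d (M.T x) ⊥ (span k {M.T (M.T x)}) (LinearMap.ker M.T)
              (Submodule.mem_span_singleton_self _) hTx2ker hdker
              (by simpa using hx2) hd hTxker)
            (le_of_eq r2')
        apply master M ![M.T (M.T x), d, M.T x, x]
          (li4 (M.T (M.T x)) d (M.T x) x ⊥ (span k {M.T (M.T x)}) (LinearMap.ker M.T) M.U₂
            (Submodule.mem_span_singleton_self _) hTx2ker hTx2U2 hdker hdU2 hTxU2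
            (by simpa using hx2) hd hTxker hx)
          rV' ({0,2,3} : Set (Fin 4)) {0} {0,1,2} ⟨0, by simp⟩ ⟨1, by simp⟩
        · intro i hi
          fin_cases i
          · show M.T (M.T (M.T x)) ∈ _
            rw [hT3]; exact Submodule.zero_mem _
          · simp at hi
          · exact Submodule.subset_span ⟨0, by simp, rfl⟩
          · exact Submodule.subset_span ⟨2, by simp, rfl⟩
        · intro i hi
          fin_cases i
          · simp at hi
          · show M.T d ∈ _
            rw [hTd]; exact Submodule.zero_mem _
          · simp at hi
          · simp at hi
        · rw [show (![M.T (M.T x), d, M.T x, x]) '' {0} = {M.T (M.T x)} by simp]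
          exact hU1x
        · rw [show (![M.T (M.T x), d, M.T x, x]) '' {0,1,2} = {M.T (M.T x), d, M.T x}
            by simp [Set.image_insert_eq]]
          exact hU2span
      · -- L3 : u itself escapes span{T²x}
        have huker : u ∈ LinearMap.ker M.T := LinearMap.mem_ker.2 hTu
        have hU2span : M.U₂ = span k {M.T (M.T x), u, M.T x} :=
          eq_span_triple _ hTx2U2 hu2 hTxU2
            (li3 (M.T (M.T x)) u (M.T x) ⊥ (span k {M.T (M.T x)}) (LinearMap.ker M.T)
              (Submodule.mem_span_singleton_self _) hTx2ker huker
              (by simpa using hx2) hu2x hTxker)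
            (le_of_eq r2')
        apply master M ![M.T (M.T x), u, M.T x, x]
          (li4 (M.T (M.T x)) u (M.T x) x ⊥ (span k {M.T (M.T x)}) (LinearMap.ker M.T) M.U₂
            (Submodule.mem_span_singleton_self _) hTx2ker hTx2U2 huker hu2 hTxU2
            (by simpa using hx2) hu2x hTxker hx)
          rV' ({0,2,3} : Set (Fin 4)) {1} {0,1,2} ⟨0, by simp⟩ ⟨1, by simp⟩
        · intro i hi
          fin_cases i
          · show M.T (M.T (M.T x)) ∈ _
            rw [hT3]; exact Submodule.zero_mem _
          · simp at hi
          · exact Submodule.subset_span ⟨0, by simp, rfl⟩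
          · exact Submodule.subset_span ⟨2, by simp, rfl⟩
        · intro i hi
          fin_cases i
          · simp at hi
          · show M.T u ∈ _
            rw [hTu]; exact Submodule.zero_mem _
          · simp at hi
          · simp at hi
        · rw [show (![M.T (M.T x), u, M.T x, x]) '' {1} = {u} by simp]
          exact hU1span
        · rw [show (![M.T (M.T x), u, M.T x, x]) '' {0,1,2} = {M.T (M.T x), u, M.T x}
            by simp [Set.image_insert_eq]]
          exact hU2span

    · -- T² vanishes off U₂, hence everywhere
      push_neg at hx3
      obtain ⟨x₀, hx₀⟩ := exists_not_mem_of_finrank_lt M.U₂ (by omega)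
      have hT2 : ∀ w : M.V, M.T (M.T w) = 0 := by
        intro w
        by_cases hw : w ∈ M.U₂
        · have h1 : x₀ + w ∉ M.U₂ := by
            intro h
            exact hx₀ (by simpa using Submodule.sub_mem _ h hw)
          have h2 := hx3 (x₀ + w) h1
          rw [map_add, map_add] at h2
          have h3 := hx3 x₀ hx₀
          rw [h3, zero_add] at h2
          exact h2
        · exact hx3 w hw
      have hTx0 : M.T x₀ ≠ 0 := by
        intro h
        exact hx₀ (hker (LinearMap.mem_ker.2 h))
      have hTx0U2 : M.T x₀ ∈ M.U₂ := hTV _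
      have hTx0ker : M.T x₀ ∈ LinearMap.ker M.T := LinearMap.mem_ker.2 (hT2 x₀)
      by_cases hrk : ∃ s ∈ M.U₂, M.T s ∉ span k {M.T x₀}
      · -- rank 2 case
        obtain ⟨s, hsU2, hTs⟩ := hrk
        have hTs0 : M.T s ≠ 0 := fun h => hTs (h ▸ Submodule.zero_mem _)
        have hsker : s ∉ LinearMap.ker M.T := fun h => hTs0 (LinearMap.mem_ker.1 h)
        have hTsker : M.T s ∈ LinearMap.ker M.T := LinearMap.mem_ker.2 (hT2 s)
        have hTsU2 : M.T s ∈ M.U₂ := hTV _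
        have hli2 : LinearIndependent k ![M.T x₀, M.T s] :=
          li2 _ _ ⊥ (span k {M.T x₀}) (Submodule.mem_span_singleton_self _)
            (by simpa using hTx0) hTs
        have hkerrk : finrank k (LinearMap.ker M.T) ≤ 2 := by
          have h1 := LinearMap.finrank_range_add_finrank_ker M.T
          have h2 : 2 ≤ finrank k (LinearMap.range M.T) :=
            card_le_finrank_of_li_mem _ ![M.T x₀, M.T s]
              (by intro i; fin_cases i <;> simp) hli2
          omega
        have hkereq : LinearMap.ker M.T = span k {M.T x₀, M.T s} :=
          eq_span_pair _ hTx0ker hTsker hli2 hkerrk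
        have huker : u ∈ LinearMap.ker M.T := LinearMap.mem_ker.2 hTu
        obtain ⟨α, β, hαβ⟩ := Submodule.mem_span_pair.1 (hkereq ▸ huker)
        by_cases hβ : β = 0
        · -- L4' : u ∈ span{T x₀}
          have hα : α ≠ 0 := by
            rintro rfl
            rw [hβ, zero_smul, zero_smul, add_zero] at hαβ
            exact hu0 hαβ.symm
          have hTx0U1 : M.T x₀ ∈ M.U₁ := by
            have h1 : α • M.T x₀ = u := by rw [← hαβ, hβ, zero_smul, add_zero]
            have h2 : M.T x₀ = α⁻¹ • u := by
              rw [← h1, smul_smul, inv_mul_cancel₀ hα, one_smul]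
            rw [h2]; exact Submodule.smul_mem _ _ hu
          have hU1x0 : M.U₁ = span k {M.T x₀} :=
            eq_span_singleton _ hTx0U1 hTx0 (le_of_eq r1)
          have hU2span : M.U₂ = span k {M.T x₀, M.T s, s} :=
            eq_span_triple _ hTx0U2 hTsU2 hsU2
              (li3 (M.T x₀) (M.T s) s ⊥ (span k {M.T x₀}) (LinearMap.ker M.T)
                (Submodule.mem_span_singleton_self _) hTx0ker hTsker
                (by simpa using hTx0) hTs hsker)
              (le_of_eq r2')
          apply master M ![M.T x₀, M.T s, s, x₀]
            (li4 (M.T x₀) (M.T s) s x₀ ⊥ (span k {M.T x₀}) (LinearMap.ker M.T) M.U₂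
              (Submodule.mem_span_singleton_self _) hTx0ker hTx0U2 hTsker hTsU2 hsU2
              (by simpa using hTx0) hTs hsker hx₀)
            rV' ({0,3} : Set (Fin 4)) {0} {0,1,2} ⟨0, by simp⟩ ⟨1, by simp⟩
          · intro i hi
            fin_cases i
            · show M.T (M.T x₀) ∈ _
              rw [hT2]; exact Submodule.zero_mem _
            · simp at hi
            · simp at hi
            · exact Submodule.subset_span ⟨0, by simp, rfl⟩
          · intro i hi
            fin_cases i
            · simp at hi
            · show M.T (M.T s) ∈ _
              rw [hT2]; exact Submodule.zero_mem _
            · exact Submodule.subset_span ⟨1, by simp, rfl⟩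
            · simp at hi
          · rw [show (![M.T x₀, M.T s, s, x₀]) '' {0} = {M.T x₀} by simp]
            exact hU1x0
          · rw [show (![M.T x₀, M.T s, s, x₀]) '' {0,1,2} = {M.T x₀, M.T s, s}
              by simp [Set.image_insert_eq]]
            exact hU2span
        · by_cases hα : α = 0
          · -- L5' : u = β • T s
            have hTsU1 : M.T s ∈ M.U₁ := by
              have h1 : β • M.T s = u := by rw [← hαβ, hα, zero_smul, zero_add]
              have h2 : M.T s = β⁻¹ • u := by
                rw [← h1, smul_smul, inv_mul_cancel₀ hβ, one_smul]
              rw [h2]; exact Submodule.smul_mem _ _ hu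
            have hU1s : M.U₁ = span k {M.T s} :=
              eq_span_singleton _ hTsU1 hTs0 (le_of_eq r1)
            have hU2span : M.U₂ = span k {M.T x₀, M.T s, s} :=
              eq_span_triple _ hTx0U2 hTsU2 hsU2
                (li3 (M.T x₀) (M.T s) s ⊥ (span k {M.T x₀}) (LinearMap.ker M.T)
                  (Submodule.mem_span_singleton_self _) hTx0ker hTsker
                  (by simpa using hTx0) hTs hsker)
                (le_of_eq r2')
            apply master M ![M.T x₀, M.T s, s, x₀]
              (li4 (M.T x₀) (M.T s) s x₀ ⊥ (span k {M.T x₀}) (LinearMap.ker M.T) M.U₂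
                (Submodule.mem_span_singleton_self _) hTx0ker hTx0U2 hTsker hTsU2 hsU2
                (by simpa using hTx0) hTs hsker hx₀)
              rV' ({0,3} : Set (Fin 4)) {1} {0,1,2} ⟨0, by simp⟩ ⟨1, by simp⟩
            · intro i hi
              fin_cases i
              · show M.T (M.T x₀) ∈ _
                rw [hT2]; exact Submodule.zero_mem _
              · simp at hi
              · simp at hi
              · exact Submodule.subset_span ⟨0, by simp, rfl⟩
            · intro i hi
              fin_cases i
              · simp at hi
              · show M.T (M.T s) ∈ _
                rw [hT2]; exact Submodule.zero_mem _
              · exact Submodule.subset_span ⟨1, by simp, rfl⟩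
              · simp at hi
            · rw [show (![M.T x₀, M.T s, s, x₀]) '' {1} = {M.T s} by simp]
              exact hU1s
            · rw [show (![M.T x₀, M.T s, s, x₀]) '' {0,1,2} = {M.T x₀, M.T s, s}
                by simp [Set.image_insert_eq]]
              exact hU2span
          · -- L7 : adjust x₀
            set x' := x₀ + (α⁻¹ * β) • s with hx'def
            have htx' : M.T x' = α⁻¹ • u := by
              rw [hx'def, map_add, map_smul, ← hαβ, smul_add, smul_smul, smul_smul,
                inv_mul_cancel₀ hα, one_smul]
            have hx' : x' ∉ M.U₂ := by
              intro h
              exact hx₀ (by simpa [hx'def] using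
                Submodule.sub_mem _ h (Submodule.smul_mem _ (α⁻¹ * β) hsU2))
            have htx'0 : M.T x' ≠ 0 := by
              rw [htx']
              exact smul_ne_zero (inv_ne_zero hα) hu0
            have htx'U1 : M.T x' ∈ M.U₁ := by rw [htx']; exact Submodule.smul_mem _ _ hu
            have htx'ker : M.T x' ∈ LinearMap.ker M.T :=
              LinearMap.mem_ker.2 (by rw [htx', map_smul, hTu, smul_zero])
            have htx'U2 : M.T x' ∈ M.U₂ := M.le12 htx'U1
            have hU1x' : M.U₁ = span k {M.T x'} :=
              eq_span_singleton _ htx'U1 htx'0 (le_of_eq r1)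
            have hTsx' : M.T s ∉ span k {M.T x'} := by
              intro hmem
              obtain ⟨e, he⟩ := Submodule.mem_span_singleton.1 hmem
              rw [htx', smul_smul, ← hαβ] at he
              have h0 : (e * α⁻¹ * α) • M.T x₀ + (e * α⁻¹ * β - 1) • M.T s = 0 := by
                linear_combination (norm := module) he
              obtain ⟨h1, h2⟩ := pair_coeffs hli2 h0
              have he0 : e = 0 := by
                have : e * α⁻¹ * α = e := by field_simp
                rwa [this] at h1
              rw [he0] at h2
              simp at h2
            have hU2span : M.U₂ = span k {M.T x', M.T s, s} :=
              eq_span_triple _ htx'U2 hTsU2 hsU2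
                (li3 (M.T x') (M.T s) s ⊥ (span k {M.T x'}) (LinearMap.ker M.T)
                  (Submodule.mem_span_singleton_self _) htx'ker hTsker
                  (by simpa using htx'0) hTsx' hsker)
              (le_of_eq r2')
            apply master M ![M.T x', M.T s, s, x']
              (li4 (M.T x') (M.T s) s x' ⊥ (span k {M.T x'}) (LinearMap.ker M.T) M.U₂
                (Submodule.mem_span_singleton_self _) htx'ker htx'U2 hTsker hTsU2 hsU2
                (by simpa using htx'0) hTsx' hsker hx')
              rV' ({0,3} : Set (Fin 4)) {0} {0,1,2} ⟨0, by simp⟩ ⟨1, by simp⟩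
            · intro i hi
              fin_cases i
              · show M.T (M.T x') ∈ _
                rw [hT2]; exact Submodule.zero_mem _
              · simp at hi
              · simp at hi
              · exact Submodule.subset_span ⟨0, by simp, rfl⟩
            · intro i hi
              fin_cases i
              · simp at hi
              · show M.T (M.T s) ∈ _
                rw [hT2]; exact Submodule.zero_mem _
              · exact Submodule.subset_span ⟨1, by simp, rfl⟩
              · simp at hi
            · rw [show (![M.T x', M.T s, s, x']) '' {0} = {M.T x'} by simp]
              exact hU1x'
            · rw [show (![M.T x', M.T s, s, x']) '' {0,1,2} = {M.T x', M.T s, s}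
                by simp [Set.image_insert_eq]]
              exact hU2span
      · -- rank 1 case : U₂ = ker T
        push_neg at hrk
        have hrange : LinearMap.range M.T ≤ span k {M.T x₀} := by
          rintro y ⟨w, rfl⟩
          by_cases hw : w ∈ M.U₂
          · exact hrk w hw
          · have htop : M.U₂ ⊔ span k {x₀} = ⊤ := sup_span_eq_top _ _ hx₀ (by omega)
            have hwmem : w ∈ M.U₂ ⊔ span k {x₀} := by rw [htop]; trivial
            obtain ⟨a, ha, z, hz, hsz⟩ := Submodule.mem_sup.1 hwmem
            obtain ⟨c, rfl⟩ := Submodule.mem_span_singleton.1 hz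
            rw [← hsz, map_add, map_smul]
            exact Submodule.add_mem _ (hrk a ha)
              (Submodule.smul_mem _ _ (Submodule.mem_span_singleton_self _))
        have hkerU2 : LinearMap.ker M.T = M.U₂ := by
          apply Submodule.eq_of_le_of_finrank_le hker
          have h1 := LinearMap.finrank_range_add_finrank_ker M.T
          have h2 : finrank k (LinearMap.range M.T) ≤ 1 := by
            have := Submodule.finrank_mono hrange
            rwa [finrank_span_singleton hTx0] at this
          have h3 : 1 ≤ finrank k (LinearMap.range M.T) := by
            have hle : span k {M.T x₀} ≤ LinearMap.range M.T := by
              rw [Submodule.span_le, Set.singleton_subset_iff]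
              exact ⟨x₀, rfl⟩
            have h6 := Submodule.finrank_mono hle
            rwa [finrank_span_singleton hTx0] at h6
          omega
        have hTU2 : ∀ t ∈ M.U₂, M.T t = 0 := by
          intro t ht
          have : t ∈ LinearMap.ker M.T := by rw [hkerU2]; exact ht
          exact LinearMap.mem_ker.1 this
        by_cases huspan : u ∈ span k {M.T x₀}
        · -- L4
          obtain ⟨c, hc⟩ := Submodule.mem_span_singleton.1 huspan
          have hc0 : c ≠ 0 := by rintro rfl; rw [zero_smul] at hc; exact hu0 hc.symm
          have hTx0U1 : M.T x₀ ∈ M.U₁ := by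
            have h2 : M.T x₀ = c⁻¹ • u := by
              rw [← hc, smul_smul, inv_mul_cancel₀ hc0, one_smul]
            rw [h2]; exact Submodule.smul_mem _ _ hu
          have hU1x0 : M.U₁ = span k {M.T x₀} :=
            eq_span_singleton _ hTx0U1 hTx0 (le_of_eq r1)
          obtain ⟨s₁, hs₁U2, hs₁⟩ := exists_mem_not_mem_of_finrank_lt M.U₂
            (span k {M.T x₀}) (by rw [finrank_span_singleton hTx0]; omega)
          obtain ⟨s₂, hs₂U2, hs₂⟩ := exists_mem_not_mem_of_finrank_lt M.U₂
            (span k {M.T x₀} ⊔ span k {s₁})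
            (by
              have h5 := finrank_sup_span_singleton_le (k := k) (span k {M.T x₀}) s₁
              rw [finrank_span_singleton hTx0] at h5
              omega)
          have hU2span : M.U₂ = span k {M.T x₀, s₁, s₂} :=
            eq_span_triple _ hTx0U2 hs₁U2 hs₂U2
              (li3 (M.T x₀) s₁ s₂ ⊥ (span k {M.T x₀}) (span k {M.T x₀} ⊔ span k {s₁})
                (Submodule.mem_span_singleton_self _) (Submodule.mem_sup_left
                  (Submodule.mem_span_singleton_self _))
                (Submodule.mem_sup_right (Submodule.mem_span_singleton_self _))
                (by simpa using hTx0) hs₁ hs₂)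
              (le_of_eq r2')
          apply master M ![M.T x₀, s₁, s₂, x₀]
            (li4 (M.T x₀) s₁ s₂ x₀ ⊥ (span k {M.T x₀}) (span k {M.T x₀} ⊔ span k {s₁}) M.U₂
              (Submodule.mem_span_singleton_self _)
              (Submodule.mem_sup_left (Submodule.mem_span_singleton_self _)) hTx0U2
              (Submodule.mem_sup_right (Submodule.mem_span_singleton_self _)) hs₁U2 hs₂U2
              (by simpa using hTx0) hs₁ hs₂ hx₀)
            rV' ({0,3} : Set (Fin 4)) {0} {0,1,2} ⟨0, by simp⟩ ⟨1, by simp⟩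
          · intro i hi
            fin_cases i
            · show M.T (M.T x₀) ∈ _
              rw [hT2]; exact Submodule.zero_mem _
            · simp at hi
            · simp at hi
            · exact Submodule.subset_span ⟨0, by simp, rfl⟩
          · intro i hi
            fin_cases i
            · simp at hi
            · show M.T s₁ ∈ _
              rw [hTU2 s₁ hs₁U2]; exact Submodule.zero_mem _
            · show M.T s₂ ∈ _
              rw [hTU2 s₂ hs₂U2]; exact Submodule.zero_mem _
            · simp at hi
          · rw [show (![M.T x₀, s₁, s₂, x₀]) '' {0} = {M.T x₀} by simp]
            exact hU1x0
          · rw [show (![M.T x₀, s₁, s₂, x₀]) '' {0,1,2} = {M.T x₀, s₁, s₂}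
              by simp [Set.image_insert_eq]]
            exact hU2span
        · -- L5
          obtain ⟨s₂, hs₂U2, hs₂⟩ := exists_mem_not_mem_of_finrank_lt M.U₂
            (span k {M.T x₀} ⊔ span k {u})
            (by
              have h5 := finrank_sup_span_singleton_le (k := k) (span k {M.T x₀}) u
              rw [finrank_span_singleton hTx0] at h5
              omega)
          have hU2span : M.U₂ = span k {M.T x₀, u, s₂} :=
            eq_span_triple _ hTx0U2 hu2 hs₂U2
              (li3 (M.T x₀) u s₂ ⊥ (span k {M.T x₀}) (span k {M.T x₀} ⊔ span k {u})
                (Submodule.mem_span_singleton_self _) (Submodule.mem_sup_left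
                  (Submodule.mem_span_singleton_self _))
                (Submodule.mem_sup_right (Submodule.mem_span_singleton_self _))
                (by simpa using hTx0) huspan hs₂)
              (le_of_eq r2')
          apply master M ![M.T x₀, u, s₂, x₀]
            (li4 (M.T x₀) u s₂ x₀ ⊥ (span k {M.T x₀}) (span k {M.T x₀} ⊔ span k {u}) M.U₂
              (Submodule.mem_span_singleton_self _)
              (Submodule.mem_sup_left (Submodule.mem_span_singleton_self _)) hTx0U2
              (Submodule.mem_sup_right (Submodule.mem_span_singleton_self _)) hu2 hs₂U2
              (by simpa using hTx0) huspan hs₂ hx₀)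
            rV' ({0,3} : Set (Fin 4)) {1} {0,1,2} ⟨0, by simp⟩ ⟨1, by simp⟩
          · intro i hi
            fin_cases i
            · show M.T (M.T x₀) ∈ _
              rw [hT2]; exact Submodule.zero_mem _
            · simp at hi
            · simp at hi
            · exact Submodule.subset_span ⟨0, by simp, rfl⟩
          · intro i hi
            fin_cases i
            · simp at hi
            · show M.T u ∈ _
              rw [hTu]; exact Submodule.zero_mem _
            · show M.T s₂ ∈ _
              rw [hTU2 s₂ hs₂U2]; exact Submodule.zero_mem _
            · simp at hi
          · rw [show (![M.T x₀, u, s₂, x₀]) '' {1} = {u} by simp]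
            exact hU1span
          · rw [show (![M.T x₀, u, s₂, x₀]) '' {0,1,2} = {M.T x₀, u, s₂}
              by simp [Set.image_insert_eq]]
            exact hU2span
  · -- L1 : kernel vector outside U₂
    obtain ⟨z, hzker, hzU2⟩ := SetLike.not_le_iff_exists.1 hker
    have hTz : M.T z = 0 := LinearMap.mem_ker.1 hzker
    obtain ⟨s₁, hs₁U2, hs₁⟩ := exists_mem_not_mem_of_finrank_lt M.U₂ M.U₁ (by omega)
    obtain ⟨s₂, hs₂U2, hs₂⟩ := exists_mem_not_mem_of_finrank_lt M.U₂ (M.U₁ ⊔ span k {s₁})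
      (by have := finrank_sup_span_singleton_le (k := k) M.U₁ s₁; omega)
    have hU2span : M.U₂ = span k {u, s₁, s₂} :=
      eq_span_triple _ hu2 hs₁U2 hs₂U2
        (li3 u s₁ s₂ ⊥ M.U₁ (M.U₁ ⊔ span k {s₁}) hu (Submodule.mem_sup_left hu)
          (Submodule.mem_sup_right (Submodule.mem_span_singleton_self s₁))
          (by simpa using hu0) hs₁ hs₂)
        (le_of_eq r2')
    apply master M ![u, s₁, s₂, z]
      (li4 u s₁ s₂ z ⊥ M.U₁ (M.U₁ ⊔ span k {s₁}) M.U₂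
        hu (Submodule.mem_sup_left hu) hu2
        (Submodule.mem_sup_right (Submodule.mem_span_singleton_self s₁)) hs₁U2 hs₂U2
        (by simpa using hu0) hs₁ hs₂ hzU2)
      rV' ({3} : Set (Fin 4)) {0} {0,1,2} ⟨3, rfl⟩ ⟨0, by simp⟩
    · intro i hi
      rw [Set.mem_singleton_iff] at hi
      subst hi
      show M.T z ∈ _
      rw [hTz]
      exact Submodule.zero_mem _
    · intro i hi
      have himg : ![u,s₁,s₂,z] '' (({3} : Set (Fin 4))ᶜ) = {u, s₁, s₂} := by
        have hc : (({3} : Set (Fin 4))ᶜ) = {0,1,2} := by ext i; fin_cases i <;> simp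
        rw [hc]
        simp [Set.image_insert_eq]
      rw [himg, ← hU2span]
      exact hTV _
    · rw [show (![u,s₁,s₂,z]) '' {0} = {u} by simp]
      exact hU1span
    · rw [show (![u,s₁,s₂,z]) '' {0,1,2} = {u,s₁,s₂} by simp [Set.image_insert_eq]]
      exact hU2span


end Half121

section MoreHelpers2

variable {k : Type u} [Field k] {V : Type u} [AddCommGroup V] [Module k V]

lemma sup_span_eq_of_codim_one [FiniteDimensional k V] (W U : Submodule k V) (x : V)
    (hWU : W ≤ U) (hxU : x ∈ U) (hxW : x ∉ W)
    (hrk : finrank k W + 1 = finrank k U) : W ⊔ span k {x} = U := by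
  apply Submodule.eq_of_le_of_finrank_le
  · exact sup_le hWU (by rw [Submodule.span_le, Set.singleton_subset_iff]; exact hxU)
  · have hlt : W < W ⊔ span k {x} := by
      apply lt_of_le_of_ne le_sup_left
      intro h
      exact hxW (h ▸ Submodule.mem_sup_right (Submodule.mem_span_singleton_self x))
    have h1 := Submodule.finrank_lt_finrank_of_lt hlt
    omega

end MoreHelpers2

section Half212

variable {k : Type u} [Field k]

set_option maxHeartbeats 3200000 in
lemma half212 (M : SystemS k 3) (hd : M.dimType = (2, 1, 2)) : ¬ M.Indecomposable := by
  obtain ⟨r1, r2, rV⟩ := dims M hd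
  have r2' : finrank k M.U₂ = 3 := by omega
  have rV' : finrank k M.V = 5 := by omega
  have hT3 : ∀ x : M.V, M.T (M.T (M.T x)) = 0 := T3zero M
  have hU1T : ∀ u ∈ M.U₁, M.T u ∈ M.U₁ := fun u hu => M.inv1 ⟨u, hu, rfl⟩
  have hU2T : ∀ s ∈ M.U₂, M.T s ∈ M.U₂ := fun s hs => M.inv2 ⟨s, hs, rfl⟩
  -- T² kills U₁
  have hT2U1 : ∀ u ∈ M.U₁, M.T (M.T u) = 0 := by
    intro u hu
    by_contra h2
    have hli : LinearIndependent k ![M.T (M.T u), M.T u, u] :=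
      li3 (M.T (M.T u)) (M.T u) u ⊥ (LinearMap.ker M.T) (LinearMap.ker (M.T ∘ₗ M.T))
        (LinearMap.mem_ker.2 (hT3 u))
        (LinearMap.mem_ker.2 (by simp only [LinearMap.comp_apply]; exact hT3 (M.T u)))
        (LinearMap.mem_ker.2 (by simp only [LinearMap.comp_apply]; exact hT3 u))
        (by simpa using h2)
        (fun h => h2 (LinearMap.mem_ker.1 h))
        (fun h => h2 (by simpa only [LinearMap.comp_apply] using LinearMap.mem_ker.1 h))
    have h3 := card_le_finrank_of_li_mem M.U₁ ![M.T (M.T u), M.T u, u]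
      (by intro i; fin_cases i <;> simp [hu, hU1T u hu, hU1T _ (hU1T u hu)]) hli
    omega
  -- choose w spanning U₂ over U₁
  obtain ⟨w, hwU2, hwU1⟩ := exists_mem_not_mem_of_finrank_lt M.U₂ M.U₁ (by omega)
  have hU2eq : M.U₁ ⊔ span k {w} = M.U₂ :=
    sup_span_eq_of_codim_one _ _ _ M.le12 hwU2 hwU1 (by omega)
  -- T maps U₂ into U₁
  have hTU2U1 : ∀ s ∈ M.U₂, M.T s ∈ M.U₁ := by
    have hTw : M.T w ∈ M.U₁ := by
      have hmem : M.T w ∈ M.U₁ ⊔ span k {w} := hU2eq ▸ hU2T w hwU2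
      obtain ⟨q, hq, z, hz, hsz⟩ := Submodule.mem_sup.1 hmem
      obtain ⟨c, rfl⟩ := Submodule.mem_span_singleton.1 hz
      have hd1 : M.T w - c • w ∈ M.U₁ := by rw [← hsz, add_sub_cancel_right]; exact hq
      have hd2 : M.T (M.T w) - (c*c) • w ∈ M.U₁ := by
        have h1 := hU1T _ hd1
        rw [map_sub, map_smul] at h1
        have h2 := Submodule.smul_mem _ c hd1
        have he : M.T (M.T w) - (c*c) • w
            = (M.T (M.T w) - c • M.T w) + c • (M.T w - c • w) := by module
        rw [he]; exact Submodule.add_mem _ h1 h2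
      have hd3 : (c*c*c) • w ∈ M.U₁ := by
        have h1 := hU1T _ hd2
        rw [map_sub, map_smul, hT3 w] at h1
        have h2 := Submodule.smul_mem _ (c*c) hd1
        have h3 := Submodule.add_mem _ h1 h2
        have he : -((c*c*c) • w) = (0 - (c*c) • M.T w) + (c*c) • (M.T w - c • w) := by
          module
        have h4 : -((c*c*c) • w) ∈ M.U₁ := he ▸ h3
        simpa using Submodule.neg_mem _ h4
      have hc0 : c = 0 := by
        by_contra hc
        exact hwU1 ((Submodule.smul_mem_iff _
          (mul_ne_zero (mul_ne_zero hc hc) hc)).1 hd3)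
      rw [← hsz, hc0, zero_smul, add_zero]
      exact hq
    intro s hs
    have hmem : s ∈ M.U₁ ⊔ span k {w} := hU2eq ▸ hs
    obtain ⟨q, hq, z, hz, hsz⟩ := Submodule.mem_sup.1 hmem
    obtain ⟨c, rfl⟩ := Submodule.mem_span_singleton.1 hz
    rw [← hsz, map_add, map_smul]
    exact Submodule.add_mem _ (hU1T q hq) (Submodule.smul_mem _ _ hTw)
  -- basis of U₁
  have hU1bot : M.U₁ ≠ ⊥ := by intro h; rw [h, finrank_bot] at r1; omega
  obtain ⟨u₁, hu₁, hu₁0⟩ := Submodule.exists_mem_ne_zero_of_ne_bot hU1bot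
  obtain ⟨u₂, hu₂U1, hu₂⟩ := exists_mem_not_mem_of_finrank_lt M.U₁ (span k {u₁})
    (by rw [finrank_span_singleton hu₁0]; omega)
  have hU1pair : M.U₁ = span k {u₁, u₂} :=
    eq_span_pair _ hu₁ hu₂U1
      (li2 u₁ u₂ ⊥ (span k {u₁}) (Submodule.mem_span_singleton_self _)
        (by simpa using hu₁0) hu₂) (le_of_eq r1)
  by_cases hII : ∃ x, M.T x ∉ M.U₂
  · -- Case II
    obtain ⟨x, hTx⟩ := hII
    have hxU2 : x ∉ M.U₂ := fun h => hTx (M.le12 (hTU2U1 x h))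
    have hxnotin : x ∉ M.U₂ ⊔ span k {M.T x} := by
      intro hmem
      obtain ⟨s, hs, z, hz, hsz⟩ := Submodule.mem_sup.1 hmem
      obtain ⟨c, rfl⟩ := Submodule.mem_span_singleton.1 hz
      have hxe : x - c • M.T x = s := by linear_combination (norm := module) hsz.symm
      have hd1 : x - c • M.T x ∈ M.U₂ := by rw [hxe]; exact hs
      have hd2 : M.T x - c • M.T (M.T x) ∈ M.U₂ := by
        have h1 := M.le12 (hTU2U1 _ hd1)
        rwa [map_sub, map_smul] at h1
      have hd3 : M.T (M.T x) ∈ M.U₂ := by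
        have h1 := M.le12 (hTU2U1 _ hd2)
        rw [map_sub, map_smul, hT3 x] at h1
        simpa using h1
      have h4 : M.T x ∈ M.U₂ := by
        have h5 := Submodule.add_mem _ hd2 (Submodule.smul_mem _ c hd3)
        simpa using h5
      exact hTx h4
    have hcoef : ∀ a b : k, a • x + b • M.T x ∈ M.U₂ → a = 0 ∧ b = 0 := by
      intro a b hmem
      by_cases ha : a = 0
      · refine ⟨ha, ?_⟩
        rw [ha, zero_smul, zero_add] at hmem
        by_contra hb
        exact hTx ((Submodule.smul_mem_iff _ hb).1 hmem)
      · exfalso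
        apply hxnotin
        have h1 : a⁻¹ • (a • x + b • M.T x) = x + (a⁻¹ * b) • M.T x := by
          rw [smul_add, smul_smul, smul_smul, inv_mul_cancel₀ ha, one_smul]
        apply Submodule.mem_sup.2
        refine ⟨a⁻¹ • (a • x + b • M.T x), Submodule.smul_mem _ _ hmem,
          -((a⁻¹ * b) • M.T x), Submodule.neg_mem _
            (Submodule.smul_mem _ _ (Submodule.mem_span_singleton_self _)), ?_⟩
        rw [h1]
        abel
    have hT2xU2 : M.T (M.T x) ∈ M.U₂ := by
      have e1 : finrank k ↥(M.U₂ ⊔ span k {M.T x}) = 4 := by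
        have hle := finrank_sup_span_singleton_le (k := k) M.U₂ (M.T x)
        have hlt : M.U₂ < M.U₂ ⊔ span k {M.T x} := by
          apply lt_of_le_of_ne le_sup_left
          intro h
          exact hTx (h ▸ Submodule.mem_sup_right (Submodule.mem_span_singleton_self _))
        have h6 := Submodule.finrank_lt_finrank_of_lt hlt
        omega
      have htop4 : (M.U₂ ⊔ span k {M.T x}) ⊔ span k {x} = ⊤ :=
        sup_span_eq_top _ _ hxnotin (by omega)
      obtain ⟨mm, hmm, z2, hz2, hsz2⟩ := Submodule.mem_sup.1
        (show M.T (M.T x) ∈ (M.U₂ ⊔ span k {M.T x}) ⊔ span k {x} by rw [htop4]; trivial)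
      obtain ⟨a, rfl⟩ := Submodule.mem_span_singleton.1 hz2
      obtain ⟨s, hs, z1, hz1, hsz1⟩ := Submodule.mem_sup.1 hmm
      obtain ⟨b, rfl⟩ := Submodule.mem_span_singleton.1 hz1
      have h0 : s + b • M.T x + a • x = M.T (M.T x) := by rw [hsz1]; exact hsz2
      have happ : M.T s + b • M.T (M.T x) + a • M.T x = 0 := by
        have h5 := congrArg M.T h0
        rw [map_add, map_add, map_smul, map_smul, hT3 x] at h5
        exact h5
      have heq2 : (a*b) • x + (a + b*b) • M.T x = -(M.T s + b • s) := by
        have h1 : M.T s + b • (s + b • M.T x + a • x) + a • M.T x = 0 := by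
          rw [h0]; exact happ
        linear_combination (norm := module) h1
      have hm2 : -(M.T s + b • s) ∈ M.U₂ :=
        Submodule.neg_mem _ (Submodule.add_mem _ (M.le12 (hTU2U1 s hs))
          (Submodule.smul_mem _ b hs))
      obtain ⟨hab, habb⟩ := hcoef _ _ (heq2 ▸ hm2)
      have hb0 : b = 0 := by
        rcases mul_eq_zero.1 hab with h' | h'
        · rw [h', zero_add] at habb
          exact mul_self_eq_zero.1 habb
        · exact h'
      have ha0 : a = 0 := by rw [hb0] at habb; simpa using habb
      rw [← h0, ha0, hb0, zero_smul, zero_smul, add_zero, add_zero]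
      exact hs
    by_cases hx2 : M.T (M.T x) = 0
    · -- M1
      have hU2span : M.U₂ = span k {u₁, u₂, w} :=
        eq_span_triple _ (M.le12 hu₁) (M.le12 hu₂U1) hwU2
          (li3 u₁ u₂ w ⊥ (span k {u₁}) M.U₁ (Submodule.mem_span_singleton_self _)
            hu₁ hu₂U1 (by simpa using hu₁0) hu₂ hwU1)
          (le_of_eq r2')
      apply master M ![u₁, u₂, w, M.T x, x]
        (li5 u₁ u₂ w (M.T x) x ⊥ (span k {u₁}) M.U₁ M.U₂ (M.U₂ ⊔ span k {M.T x})
          (Submodule.mem_span_singleton_self _) hu₁ (M.le12 hu₁)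
          (Submodule.mem_sup_left (M.le12 hu₁))
          hu₂U1 (M.le12 hu₂U1) (Submodule.mem_sup_left (M.le12 hu₂U1))
          hwU2 (Submodule.mem_sup_left hwU2)
          (Submodule.mem_sup_right (Submodule.mem_span_singleton_self _))
          (by simpa using hu₁0) hu₂ hwU1 hTx hxnotin)
        rV' ({3,4} : Set (Fin 5)) {0,1} {0,1,2} ⟨3, by simp⟩ ⟨0, by simp⟩
      · intro i hi
        fin_cases i
        · simp at hi
        · simp at hi
        · simp at hi
        · show M.T (M.T x) ∈ _
          rw [hx2]; exact Submodule.zero_mem _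
        · exact Submodule.subset_span ⟨3, by simp, rfl⟩
      · intro i hi
        have hspan : span k (![u₁,u₂,w,M.T x,x] '' (({3,4} : Set (Fin 5))ᶜ)) = M.U₂ := by
          have hc : (({3,4} : Set (Fin 5))ᶜ) = {0,1,2} := by ext j; fin_cases j <;> simp
          rw [hc, show (![u₁,u₂,w,M.T x,x]) '' {0,1,2} = {u₁,u₂,w}
            by simp [Set.image_insert_eq], ← hU2span]
        rw [hspan]
        fin_cases i
        · exact M.le12 (hU1T u₁ hu₁)
        · exact M.le12 (hU1T u₂ hu₂U1)
        · exact hU2T w hwU2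
        · simp at hi
        · simp at hi
      · rw [show (![u₁,u₂,w,M.T x,x]) '' {0,1} = {u₁,u₂} by simp [Set.image_insert_eq]]
        exact hU1pair
      · rw [show (![u₁,u₂,w,M.T x,x]) '' {0,1,2} = {u₁,u₂,w} by simp [Set.image_insert_eq]]
        exact hU2span
    · by_cases h21 : M.T (M.T x) ∈ M.U₁
      · -- T²x ∈ U₁
        have hTwU1 : M.T w ∈ M.U₁ := hTU2U1 w hwU2
        by_cases hTw : M.T w ∈ span k {M.T (M.T x)}
        · obtain ⟨a, ha⟩ := Submodule.mem_span_singleton.1 hTw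
          by_cases hk : ∃ u', u' ∈ M.U₁ ∧ u' ∉ span k {M.T (M.T x)} ∧ M.T u' = 0
          · -- M3
            obtain ⟨u', hu'U1, hu'sp, hTu'⟩ := hk
            have hU1x : M.U₁ = span k {M.T (M.T x), u'} :=
              eq_span_pair _ h21 hu'U1
                (li2 _ _ ⊥ (span k {M.T (M.T x)}) (Submodule.mem_span_singleton_self _)
                  (by simpa using hx2) hu'sp) (le_of_eq r1)
            have hU2span : M.U₂ = span k {M.T (M.T x), u', w} :=
              eq_span_triple _ hT2xU2 (M.le12 hu'U1) hwU2
                (li3 _ _ _ ⊥ (span k {M.T (M.T x)}) M.U₁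
                  (Submodule.mem_span_singleton_self _) h21 hu'U1
                  (by simpa using hx2) hu'sp hwU1) (le_of_eq r2')
            apply master M ![M.T (M.T x), u', w, M.T x, x]
              (li5 (M.T (M.T x)) u' w (M.T x) x ⊥ (span k {M.T (M.T x)}) M.U₁ M.U₂
                (M.U₂ ⊔ span k {M.T x})
                (Submodule.mem_span_singleton_self _) h21 hT2xU2
                (Submodule.mem_sup_left hT2xU2)
                hu'U1 (M.le12 hu'U1) (Submodule.mem_sup_left (M.le12 hu'U1))
                hwU2 (Submodule.mem_sup_left hwU2)
                (Submodule.mem_sup_right (Submodule.mem_span_singleton_self _))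
                (by simpa using hx2) hu'sp hwU1 hTx hxnotin)
              rV' ({0,2,3,4} : Set (Fin 5)) {0,1} {0,1,2} ⟨0, by simp⟩ ⟨1, by simp⟩
            · intro i hi
              fin_cases i
              · show M.T (M.T (M.T x)) ∈ _
                rw [hT3]; exact Submodule.zero_mem _
              · simp at hi
              · show M.T w ∈ _
                rw [← ha]
                exact Submodule.smul_mem _ _ (Submodule.subset_span ⟨0, by simp, rfl⟩)
              · exact Submodule.subset_span ⟨0, by simp, rfl⟩
              · exact Submodule.subset_span ⟨3, by simp, rfl⟩
            · intro i hi
              fin_cases i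
              · simp at hi
              · show M.T u' ∈ _
                rw [hTu']; exact Submodule.zero_mem _
              · simp at hi
              · simp at hi
              · simp at hi
            · rw [show (![M.T (M.T x), u', w, M.T x, x]) '' {0,1} = {M.T (M.T x), u'}
                by simp [Set.image_insert_eq]]
              exact hU1x
            · rw [show (![M.T (M.T x), u', w, M.T x, x]) '' {0,1,2} = {M.T (M.T x), u', w}
                by simp [Set.image_insert_eq]]
              exact hU2span
          · -- M5
            push_neg at hk
            obtain ⟨u0, hu0U1, hu0sp⟩ := exists_mem_not_mem_of_finrank_lt M.U₁
              (span k {M.T (M.T x)}) (by rw [finrank_span_singleton hx2]; omega)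
            have hTu0 : M.T u0 ≠ 0 := hk u0 hu0U1 hu0sp
            have hTu0U1 : M.T u0 ∈ M.U₁ := hU1T _ hu0U1
            have hTu0sp : M.T u0 ∈ span k {M.T (M.T x)} := by
              by_contra h
              exact hk (M.T u0) hTu0U1 h (hT2U1 u0 hu0U1)
            obtain ⟨c, hc⟩ := Submodule.mem_span_singleton.1 hTu0sp
            have hc0 : c ≠ 0 := by rintro rfl; rw [zero_smul] at hc; exact hTu0 hc.symm
            set ut := c⁻¹ • u0 with hutdef
            have hTut : M.T ut = M.T (M.T x) := by
              rw [hutdef, map_smul, ← hc, smul_smul, inv_mul_cancel₀ hc0, one_smul]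
            have hutU1 : ut ∈ M.U₁ := Submodule.smul_mem _ _ hu0U1
            have hutsp : ut ∉ span k {M.T (M.T x)} := by
              intro h
              apply hu0sp
              have h6 := Submodule.smul_mem _ c h
              rwa [hutdef, smul_smul, mul_inv_cancel₀ hc0, one_smul] at h6
            set w' := w - a • ut with hw'def
            have hTw' : M.T w' = 0 := by
              rw [hw'def, map_sub, map_smul, hTut, ← ha, sub_self]
            have hw'U2 : w' ∈ M.U₂ :=
              Submodule.sub_mem _ hwU2 (Submodule.smul_mem _ _ (M.le12 hutU1))
            have hw'U1 : w' ∉ M.U₁ := by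
              intro h
              apply hwU1
              have h6 := Submodule.add_mem _ h (Submodule.smul_mem _ a hutU1)
              simpa [hw'def] using h6
            have hU1x : M.U₁ = span k {M.T (M.T x), ut} :=
              eq_span_pair _ h21 hutU1
                (li2 _ _ ⊥ (span k {M.T (M.T x)}) (Submodule.mem_span_singleton_self _)
                  (by simpa using hx2) hutsp) (le_of_eq r1)
            have hU2span : M.U₂ = span k {M.T (M.T x), ut, w'} :=
              eq_span_triple _ hT2xU2 (M.le12 hutU1) hw'U2
                (li3 _ _ _ ⊥ (span k {M.T (M.T x)}) M.U₁
                  (Submodule.mem_span_singleton_self _) h21 hutU1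
                  (by simpa using hx2) hutsp hw'U1) (le_of_eq r2')
            apply master M ![M.T (M.T x), ut, w', M.T x, x]
              (li5 (M.T (M.T x)) ut w' (M.T x) x ⊥ (span k {M.T (M.T x)}) M.U₁ M.U₂
                (M.U₂ ⊔ span k {M.T x})
                (Submodule.mem_span_singleton_self _) h21 hT2xU2
                (Submodule.mem_sup_left hT2xU2)
                hutU1 (M.le12 hutU1) (Submodule.mem_sup_left (M.le12 hutU1))
                hw'U2 (Submodule.mem_sup_left hw'U2)
                (Submodule.mem_sup_right (Submodule.mem_span_singleton_self _))
                (by simpa using hx2) hutsp hw'U1 hTx hxnotin)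
              rV' ({0,1,3,4} : Set (Fin 5)) {0,1} {0,1,2} ⟨0, by simp⟩ ⟨2, by simp⟩
            · intro i hi
              fin_cases i
              · show M.T (M.T (M.T x)) ∈ _
                rw [hT3]; exact Submodule.zero_mem _
              · show M.T ut ∈ _
                rw [hTut]
                exact Submodule.subset_span ⟨0, by simp, rfl⟩
              · simp at hi
              · exact Submodule.subset_span ⟨0, by simp, rfl⟩
              · exact Submodule.subset_span ⟨3, by simp, rfl⟩
            · intro i hi
              fin_cases i
              · simp at hi
              · simp at hi
              · show M.T w' ∈ _
                rw [hTw']; exact Submodule.zero_mem _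
              · simp at hi
              · simp at hi
            · rw [show (![M.T (M.T x), ut, w', M.T x, x]) '' {0,1} = {M.T (M.T x), ut}
                by simp [Set.image_insert_eq]]
              exact hU1x
            · rw [show (![M.T (M.T x), ut, w', M.T x, x]) '' {0,1,2} = {M.T (M.T x), ut, w'}
                by simp [Set.image_insert_eq]]
              exact hU2span
        · -- T w ∉ span {T²x}
          have hU1x : M.U₁ = span k {M.T (M.T x), M.T w} :=
            eq_span_pair _ h21 hTwU1
              (li2 _ _ ⊥ (span k {M.T (M.T x)}) (Submodule.mem_span_singleton_self _)
                (by simpa using hx2) hTw) (le_of_eq r1)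
          have hU2span : M.U₂ = span k {M.T (M.T x), M.T w, w} :=
            eq_span_triple _ hT2xU2 (M.le12 hTwU1) hwU2
              (li3 _ _ _ ⊥ (span k {M.T (M.T x)}) M.U₁
                (Submodule.mem_span_singleton_self _) h21 hTwU1
                (by simpa using hx2) hTw hwU1) (le_of_eq r2')
          by_cases hTTw : M.T (M.T w) = 0
          · -- M4'
            apply master M ![M.T (M.T x), M.T w, w, M.T x, x]
              (li5 (M.T (M.T x)) (M.T w) w (M.T x) x ⊥ (span k {M.T (M.T x)}) M.U₁ M.U₂
                (M.U₂ ⊔ span k {M.T x})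
                (Submodule.mem_span_singleton_self _) h21 hT2xU2
                (Submodule.mem_sup_left hT2xU2)
                hTwU1 (M.le12 hTwU1) (Submodule.mem_sup_left (M.le12 hTwU1))
                hwU2 (Submodule.mem_sup_left hwU2)
                (Submodule.mem_sup_right (Submodule.mem_span_singleton_self _))
                (by simpa using hx2) hTw hwU1 hTx hxnotin)
              rV' ({0,3,4} : Set (Fin 5)) {0,1} {0,1,2} ⟨0, by simp⟩ ⟨1, by simp⟩
            · intro i hi
              fin_cases i
              · show M.T (M.T (M.T x)) ∈ _
                rw [hT3]; exact Submodule.zero_mem _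
              · simp at hi
              · simp at hi
              · exact Submodule.subset_span ⟨0, by simp, rfl⟩
              · exact Submodule.subset_span ⟨3, by simp, rfl⟩
            · intro i hi
              fin_cases i
              · simp at hi
              · show M.T (M.T w) ∈ _
                rw [hTTw]; exact Submodule.zero_mem _
              · exact Submodule.subset_span ⟨1, by simp, rfl⟩
              · simp at hi
              · simp at hi
            · rw [show (![M.T (M.T x), M.T w, w, M.T x, x]) '' {0,1} = {M.T (M.T x), M.T w}
                by simp [Set.image_insert_eq]]
              exact hU1x
            · rw [show (![M.T (M.T x), M.T w, w, M.T x, x]) '' {0,1,2}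
                = {M.T (M.T x), M.T w, w} by simp [Set.image_insert_eq]]
              exact hU2span
          · -- M6'
            have hTTwU1 : M.T (M.T w) ∈ M.U₁ := hU1T _ hTwU1
            obtain ⟨p, q, hpq⟩ := Submodule.mem_span_pair.1 (hU1x ▸ hTTwU1)
            have hq0 : q = 0 := by
              have h5 := congrArg M.T hpq
              rw [map_add, map_smul, map_smul, hT3 x, smul_zero, zero_add,
                hT2U1 _ hTwU1] at h5
              rcases smul_eq_zero.1 h5 with h' | h'
              · exact h'
              · exact absurd h' hTTw
            have hp' : p • M.T (M.T x) = M.T (M.T w) := by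
              rw [← hpq, hq0, zero_smul, add_zero]
            have hp0 : p ≠ 0 := by
              rintro rfl; rw [zero_smul] at hp'; exact hTTw hp'.symm
            set xt := x - p⁻¹ • w with hxtdef
            have hTxt : M.T xt = M.T x - p⁻¹ • M.T w := by
              rw [hxtdef, map_sub, map_smul]
            have hT2xt : M.T (M.T xt) = 0 := by
              rw [hTxt, map_sub, map_smul, ← hp', smul_smul,
                inv_mul_cancel₀ hp0, one_smul, sub_self]
            have hTxtU2 : M.T xt ∉ M.U₂ := by
              intro h
              apply hTx
              have h6 := Submodule.add_mem _ h
                (Submodule.smul_mem _ p⁻¹ (M.le12 hTwU1))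
              rw [hTxt] at h6
              simpa using h6
            have hxtnotin : xt ∉ M.U₂ ⊔ span k {M.T xt} := by
              intro hmem
              obtain ⟨s, hs, z, hz, hsz⟩ := Submodule.mem_sup.1 hmem
              obtain ⟨c, rfl⟩ := Submodule.mem_span_singleton.1 hz
              apply hTxtU2
              have h5 := congrArg M.T hsz
              rw [map_add, map_smul, hT2xt, smul_zero, add_zero] at h5
              rw [← h5]
              exact M.le12 (hTU2U1 s hs)
            apply master M ![M.T (M.T x), M.T w, w, M.T xt, xt]
              (li5 (M.T (M.T x)) (M.T w) w (M.T xt) xt ⊥ (span k {M.T (M.T x)}) M.U₁ M.U₂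
                (M.U₂ ⊔ span k {M.T xt})
                (Submodule.mem_span_singleton_self _) h21 hT2xU2
                (Submodule.mem_sup_left hT2xU2)
                hTwU1 (M.le12 hTwU1) (Submodule.mem_sup_left (M.le12 hTwU1))
                hwU2 (Submodule.mem_sup_left hwU2)
                (Submodule.mem_sup_right (Submodule.mem_span_singleton_self _))
                (by simpa using hx2) hTw hwU1 hTxtU2 hxtnotin)
              rV' ({3,4} : Set (Fin 5)) {0,1} {0,1,2} ⟨3, by simp⟩ ⟨0, by simp⟩
            · intro i hi
              fin_cases i
              · simp at hi
              · simp at hi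
              · simp at hi
              · show M.T (M.T xt) ∈ _
                rw [hT2xt]; exact Submodule.zero_mem _
              · exact Submodule.subset_span ⟨3, by simp, rfl⟩
            · intro i hi
              fin_cases i
              · show M.T (M.T (M.T x)) ∈ _
                rw [hT3]; exact Submodule.zero_mem _
              · show M.T (M.T w) ∈ _
                rw [← hp']
                exact Submodule.smul_mem _ _ (Submodule.subset_span ⟨0, by simp, rfl⟩)
              · exact Submodule.subset_span ⟨1, by simp, rfl⟩
              · simp at hi
              · simp at hi
            · rw [show (![M.T (M.T x), M.T w, w, M.T xt, xt]) '' {0,1}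
                = {M.T (M.T x), M.T w} by simp [Set.image_insert_eq]]
              exact hU1x
            · rw [show (![M.T (M.T x), M.T w, w, M.T xt, xt]) '' {0,1,2}
                = {M.T (M.T x), M.T w, w} by simp [Set.image_insert_eq]]
              exact hU2span
      · -- M7 : T²x ∉ U₁
        have hU2span : M.U₂ = span k {u₁, u₂, M.T (M.T x)} :=
          eq_span_triple _ (M.le12 hu₁) (M.le12 hu₂U1) hT2xU2
            (li3 u₁ u₂ (M.T (M.T x)) ⊥ (span k {u₁}) M.U₁
              (Submodule.mem_span_singleton_self _) hu₁ hu₂U1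
              (by simpa using hu₁0) hu₂ h21)
            (le_of_eq r2')
        apply master M ![u₁, u₂, M.T (M.T x), M.T x, x]
          (li5 u₁ u₂ (M.T (M.T x)) (M.T x) x ⊥ (span k {u₁}) M.U₁ M.U₂
            (M.U₂ ⊔ span k {M.T x})
            (Submodule.mem_span_singleton_self _) hu₁ (M.le12 hu₁)
            (Submodule.mem_sup_left (M.le12 hu₁))
            hu₂U1 (M.le12 hu₂U1) (Submodule.mem_sup_left (M.le12 hu₂U1))
            hT2xU2 (Submodule.mem_sup_left hT2xU2)
            (Submodule.mem_sup_right (Submodule.mem_span_singleton_self _))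
            (by simpa using hu₁0) hu₂ h21 hTx hxnotin)
          rV' ({2,3,4} : Set (Fin 5)) {0,1} {0,1,2} ⟨2, by simp⟩ ⟨0, by simp⟩
        · intro i hi
          fin_cases i
          · simp at hi
          · simp at hi
          · show M.T (M.T (M.T x)) ∈ _
            rw [hT3]; exact Submodule.zero_mem _
          · exact Submodule.subset_span ⟨2, by simp, rfl⟩
          · exact Submodule.subset_span ⟨3, by simp, rfl⟩
        · intro i hi
          have hspan : span k (![u₁,u₂,M.T (M.T x),M.T x,x] '' (({2,3,4} : Set (Fin 5))ᶜ))
              = M.U₁ := by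
            have hc : (({2,3,4} : Set (Fin 5))ᶜ) = {0,1} := by ext j; fin_cases j <;> simp
            rw [hc, show (![u₁,u₂,M.T (M.T x),M.T x,x]) '' {0,1} = {u₁,u₂}
              by simp [Set.image_insert_eq], ← hU1pair]
          rw [hspan]
          fin_cases i
          · exact hU1T u₁ hu₁
          · exact hU1T u₂ hu₂U1
          · simp at hi
          · simp at hi
          · simp at hi
        · rw [show (![u₁,u₂,M.T (M.T x),M.T x,x]) '' {0,1} = {u₁,u₂}
            by simp [Set.image_insert_eq]]
          exact hU1pair
        · rw [show (![u₁,u₂,M.T (M.T x),M.T x,x]) '' {0,1,2} = {u₁,u₂,M.T (M.T x)}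
            by simp [Set.image_insert_eq]]
          exact hU2span
  · -- Case I : T V ⊆ U₂
    push_neg at hII
    by_cases hIa : ∃ z, z ∉ M.U₂ ∧ M.T z = 0
    · -- M8
      obtain ⟨z, hzU2, hTz⟩ := hIa
      obtain ⟨p, hp⟩ := exists_not_mem_of_finrank_lt (M.U₂ ⊔ span k {z})
        (by have h6 := finrank_sup_span_singleton_le (k := k) M.U₂ z; omega)
      have hU2span : M.U₂ = span k {u₁, u₂, w} :=
        eq_span_triple _ (M.le12 hu₁) (M.le12 hu₂U1) hwU2
          (li3 u₁ u₂ w ⊥ (span k {u₁}) M.U₁ (Submodule.mem_span_singleton_self _)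
            hu₁ hu₂U1 (by simpa using hu₁0) hu₂ hwU1)
          (le_of_eq r2')
      apply master M ![u₁, u₂, w, z, p]
        (li5 u₁ u₂ w z p ⊥ (span k {u₁}) M.U₁ M.U₂ (M.U₂ ⊔ span k {z})
          (Submodule.mem_span_singleton_self _) hu₁ (M.le12 hu₁)
          (Submodule.mem_sup_left (M.le12 hu₁))
          hu₂U1 (M.le12 hu₂U1) (Submodule.mem_sup_left (M.le12 hu₂U1))
          hwU2 (Submodule.mem_sup_left hwU2)
          (Submodule.mem_sup_right (Submodule.mem_span_singleton_self _))
          (by simpa using hu₁0) hu₂ hwU1 hzU2 hp)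
        rV' ({3} : Set (Fin 5)) {0,1} {0,1,2} ⟨3, by simp⟩ ⟨0, by simp⟩
      · intro i hi
        rw [Set.mem_singleton_iff] at hi
        subst hi
        show M.T z ∈ _
        rw [hTz]
        exact Submodule.zero_mem _
      · intro i hi
        have hle : M.U₂ ≤ span k (![u₁,u₂,w,z,p] '' (({3} : Set (Fin 5))ᶜ)) := by
          have hc : (({3} : Set (Fin 5))ᶜ) = {0,1,2,4} := by ext j; fin_cases j <;> simp
          rw [hc, show (![u₁,u₂,w,z,p]) '' {0,1,2,4} = {u₁,u₂,w,p}
            by simp [Set.image_insert_eq], hU2span]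
          apply Submodule.span_mono
          intro t ht
          simp only [Set.mem_insert_iff, Set.mem_singleton_iff] at ht ⊢
          tauto
        exact hle (hII _)
      · rw [show (![u₁,u₂,w,z,p]) '' {0,1} = {u₁,u₂} by simp [Set.image_insert_eq]]
        exact hU1pair
      · rw [show (![u₁,u₂,w,z,p]) '' {0,1,2} = {u₁,u₂,w} by simp [Set.image_insert_eq]]
        exact hU2span
    · -- kernel of T inside U₂
      push_neg at hIa
      have hkerU2 : ∀ z, M.T z = 0 → z ∈ M.U₂ := by
        intro z hz
        by_contra h
        exact hIa z h hz
      obtain ⟨x₁, hx₁⟩ := exists_not_mem_of_finrank_lt M.U₂ (by omega)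
      obtain ⟨x₂, hx₂⟩ := exists_not_mem_of_finrank_lt (M.U₂ ⊔ span k {x₁})
        (by have h6 := finrank_sup_span_singleton_le (k := k) M.U₂ x₁; omega)
      obtain ⟨q₁, hq₁, z₁, hz₁, hsz₁⟩ := Submodule.mem_sup.1
        (show M.T x₁ ∈ M.U₁ ⊔ span k {w} by rw [hU2eq]; exact hII x₁)
      obtain ⟨c₁, rfl⟩ := Submodule.mem_span_singleton.1 hz₁
      obtain ⟨q₂, hq₂, z₂, hz₂, hsz₂⟩ := Submodule.mem_sup.1
        (show M.T x₂ ∈ M.U₁ ⊔ span k {w} by rw [hU2eq]; exact hII x₂)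
      obtain ⟨c₂, rfl⟩ := Submodule.mem_span_singleton.1 hz₂
      have hy : ∃ y, y ∉ M.U₂ ∧ M.T y ∈ M.U₁ := by
        by_cases hc₁0 : c₁ = 0
        · exact ⟨x₁, hx₁, by rw [← hsz₁, hc₁0, zero_smul, add_zero]; exact hq₁⟩
        · refine ⟨x₂ - (c₂ * c₁⁻¹) • x₁, ?_, ?_⟩
          · intro h
            apply hx₂
            exact Submodule.mem_sup.2 ⟨x₂ - (c₂ * c₁⁻¹) • x₁, h, (c₂ * c₁⁻¹) • x₁,
              Submodule.smul_mem _ _ (Submodule.mem_span_singleton_self _), by abel⟩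
          · rw [map_sub, map_smul, ← hsz₁, ← hsz₂]
            have he : (q₂ + c₂ • w) - (c₂ * c₁⁻¹) • (q₁ + c₁ • w)
                = (q₂ - (c₂ * c₁⁻¹) • q₁) + (c₂ - c₂ * c₁⁻¹ * c₁) • w := by module
            rw [he, show c₂ - c₂ * c₁⁻¹ * c₁ = 0 by rw [mul_assoc, inv_mul_cancel₀ hc₁0, mul_one, sub_self], zero_smul, add_zero]
            exact Submodule.sub_mem _ hq₂ (Submodule.smul_mem _ _ hq₁)
      obtain ⟨y, hyU2, hTyU1⟩ := hy
      have hTy0 : M.T y ≠ 0 := hIa y hyU2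
      obtain ⟨x1, hx1⟩ := exists_not_mem_of_finrank_lt (M.U₂ ⊔ span k {y})
        (by have h6 := finrank_sup_span_singleton_le (k := k) M.U₂ y; omega)
      by_cases hy2 : M.T (M.T y) = 0
      · -- T kills U₁
        have hTU1zero : ∀ v ∈ M.U₁, M.T v = 0 := by
          intro v hv
          by_contra hTv
          by_cases hdep : M.T v ∈ span k {M.T y}
          · obtain ⟨c, hc⟩ := Submodule.mem_span_singleton.1 hdep
            have hc0 : c ≠ 0 := by rintro rfl; rw [zero_smul] at hc; exact hTv hc.symm
            have hkerz : M.T (c⁻¹ • v - y) = 0 := by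
              rw [map_sub, map_smul, ← hc, smul_smul, inv_mul_cancel₀ hc0, one_smul,
                sub_self]
            have hnm : c⁻¹ • v - y ∉ M.U₂ := by
              intro h
              apply hyU2
              have h6 := Submodule.sub_mem _ (Submodule.smul_mem _ c⁻¹ (M.le12 hv)) h
              simpa using h6
            exact hIa _ hnm hkerz
          · have hli : LinearIndependent k ![M.T y, M.T v] :=
              li2 _ _ ⊥ (span k {M.T y}) (Submodule.mem_span_singleton_self _)
                (by simpa using hTy0) hdep
            have hU1yv : M.U₁ = span k {M.T y, M.T v} :=
              eq_span_pair _ hTyU1 (hU1T _ hv) hli (le_of_eq r1)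
            obtain ⟨a, b, hab⟩ := Submodule.mem_span_pair.1 (hU1yv ▸ hv)
            apply hTv
            have h5 := congrArg M.T hab
            rw [map_add, map_smul, map_smul, hy2, smul_zero, hT2U1 v hv,
              smul_zero, add_zero] at h5
            exact h5.symm
        obtain ⟨u, huU1, husp⟩ := exists_mem_not_mem_of_finrank_lt M.U₁ (span k {M.T y})
          (by rw [finrank_span_singleton hTy0]; omega)
        have hTu : M.T u = 0 := hTU1zero u huU1
        have hU1y : M.U₁ = span k {M.T y, u} := eq_span_pair _ hTyU1 huU1
          (li2 _ _ ⊥ (span k {M.T y}) (Submodule.mem_span_singleton_self _)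
            (by simpa using hTy0) husp) (le_of_eq r1)
        by_cases hTwy : M.T w ∈ span k {M.T y}
        · obtain ⟨α, hα⟩ := Submodule.mem_span_singleton.1 hTwy
          by_cases hTw0 : M.T w = 0
          · -- M10'
            obtain ⟨q, hq, z, hz, hszq⟩ := Submodule.mem_sup.1
              (show M.T x1 ∈ M.U₁ ⊔ span k {w} by rw [hU2eq]; exact hII x1)
            obtain ⟨c, rfl⟩ := Submodule.mem_span_singleton.1 hz
            obtain ⟨a, b, habq⟩ := Submodule.mem_span_pair.1 (hU1y ▸ hq)
            set x1' := x1 - a • y with hx1'def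
            have hTx1' : M.T x1' = b • u + c • w := by
              rw [hx1'def, map_sub, map_smul, ← hszq, ← habq]
              module
            have hx1'nm : x1' ∉ M.U₂ ⊔ span k {y} := by
              intro h
              apply hx1
              have h6 := Submodule.add_mem _ h (Submodule.mem_sup_right
                (Submodule.smul_mem _ a (Submodule.mem_span_singleton_self y)))
              simpa [hx1'def] using h6
            have hU2span : M.U₂ = span k {M.T y, u, w} :=
              eq_span_triple _ (M.le12 hTyU1) (M.le12 huU1) hwU2
                (li3 _ _ _ ⊥ (span k {M.T y}) M.U₁ (Submodule.mem_span_singleton_self _)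
                  hTyU1 huU1 (by simpa using hTy0) husp hwU1) (le_of_eq r2')
            apply master M ![M.T y, u, w, y, x1']
              (li5 (M.T y) u w y x1' ⊥ (span k {M.T y}) M.U₁ M.U₂ (M.U₂ ⊔ span k {y})
                (Submodule.mem_span_singleton_self _) hTyU1 (M.le12 hTyU1)
                (Submodule.mem_sup_left (M.le12 hTyU1))
                huU1 (M.le12 huU1) (Submodule.mem_sup_left (M.le12 huU1))
                hwU2 (Submodule.mem_sup_left hwU2)
                (Submodule.mem_sup_right (Submodule.mem_span_singleton_self _))
                (by simpa using hTy0) husp hwU1 hyU2 hx1'nm)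
              rV' ({0,3} : Set (Fin 5)) {0,1} {0,1,2} ⟨0, by simp⟩ ⟨1, by simp⟩
            · intro i hi
              fin_cases i
              · show M.T (M.T y) ∈ _
                rw [hy2]; exact Submodule.zero_mem _
              · simp at hi
              · simp at hi
              · exact Submodule.subset_span ⟨0, by simp, rfl⟩
              · simp at hi
            · intro i hi
              fin_cases i
              · simp at hi
              · show M.T u ∈ _
                rw [hTu]; exact Submodule.zero_mem _
              · show M.T w ∈ _
                rw [hTw0]; exact Submodule.zero_mem _
              · simp at hi
              · show M.T x1' ∈ _
                rw [hTx1']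
                exact Submodule.add_mem _
                  (Submodule.smul_mem _ _ (Submodule.subset_span ⟨1, by simp, rfl⟩))
                  (Submodule.smul_mem _ _ (Submodule.subset_span ⟨2, by simp, rfl⟩))
            · rw [show (![M.T y, u, w, y, x1']) '' {0,1} = {M.T y, u}
                by simp [Set.image_insert_eq]]
              exact hU1y
            · rw [show (![M.T y, u, w, y, x1']) '' {0,1,2} = {M.T y, u, w}
                by simp [Set.image_insert_eq]]
              exact hU2span
          · -- contradiction : w - α•y is a kernel vector outside U₂
            exfalso
            have hα0 : α ≠ 0 := by rintro rfl; rw [zero_smul] at hα; exact hTw0 hα.symm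
            have hkerz : M.T (w - α • y) = 0 := by
              rw [map_sub, map_smul, ← hα]
              have he : α • M.T y - α • M.T y = 0 := sub_self _
              exact he
            have hnm : w - α • y ∉ M.U₂ := by
              intro h
              apply hyU2
              have h6 := Submodule.sub_mem _ hwU2 h
              have h7 : α • y ∈ M.U₂ := by simpa using h6
              exact (Submodule.smul_mem_iff _ hα0).1 h7
            exact hIa _ hnm hkerz
        · -- M11'
          have hTwU1' : M.T w ∈ M.U₁ := hTU2U1 w hwU2
          have hU1yw : M.U₁ = span k {M.T y, M.T w} := eq_span_pair _ hTyU1 hTwU1'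
            (li2 _ _ ⊥ (span k {M.T y}) (Submodule.mem_span_singleton_self _)
              (by simpa using hTy0) hTwy) (le_of_eq r1)
          have hTTw0 : M.T (M.T w) = 0 := hTU1zero _ hTwU1'
          obtain ⟨q, hq, z, hz, hszq⟩ := Submodule.mem_sup.1
            (show M.T x1 ∈ M.U₁ ⊔ span k {w} by rw [hU2eq]; exact hII x1)
          obtain ⟨c, rfl⟩ := Submodule.mem_span_singleton.1 hz
          obtain ⟨a, b, habq⟩ := Submodule.mem_span_pair.1 (hU1yw ▸ hq)
          set x1' := x1 - a • y - b • w with hx1'def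
          have hTx1' : M.T x1' = c • w := by
            rw [hx1'def, map_sub, map_sub, map_smul, map_smul, ← hszq, ← habq]
            module
          have hx1'nm : x1' ∉ M.U₂ ⊔ span k {y} := by
            intro h
            apply hx1
            have h6 := Submodule.add_mem _ (Submodule.add_mem _ h
              (Submodule.mem_sup_left (Submodule.smul_mem _ b hwU2)))
              (Submodule.mem_sup_right
                (Submodule.smul_mem _ a (Submodule.mem_span_singleton_self y)))
            simpa [hx1'def, sub_add_cancel] using h6
          have hU2span : M.U₂ = span k {M.T y, M.T w, w} :=
            eq_span_triple _ (M.le12 hTyU1) (M.le12 hTwU1') hwU2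
              (li3 _ _ _ ⊥ (span k {M.T y}) M.U₁ (Submodule.mem_span_singleton_self _)
                hTyU1 hTwU1' (by simpa using hTy0) hTwy hwU1) (le_of_eq r2')
          apply master M ![M.T y, M.T w, w, y, x1']
            (li5 (M.T y) (M.T w) w y x1' ⊥ (span k {M.T y}) M.U₁ M.U₂ (M.U₂ ⊔ span k {y})
              (Submodule.mem_span_singleton_self _) hTyU1 (M.le12 hTyU1)
              (Submodule.mem_sup_left (M.le12 hTyU1))
              hTwU1' (M.le12 hTwU1') (Submodule.mem_sup_left (M.le12 hTwU1'))
              hwU2 (Submodule.mem_sup_left hwU2)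
              (Submodule.mem_sup_right (Submodule.mem_span_singleton_self _))
              (by simpa using hTy0) hTwy hwU1 hyU2 hx1'nm)
            rV' ({1,2,4} : Set (Fin 5)) {0,1} {0,1,2} ⟨1, by simp⟩ ⟨0, by simp⟩
          · intro i hi
            fin_cases i
            · simp at hi
            · show M.T (M.T w) ∈ _
              rw [hTTw0]; exact Submodule.zero_mem _
            · exact Submodule.subset_span ⟨1, by simp, rfl⟩
            · simp at hi
            · show M.T x1' ∈ _
              rw [hTx1']
              exact Submodule.smul_mem _ _ (Submodule.subset_span ⟨2, by simp, rfl⟩)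
          · intro i hi
            fin_cases i
            · show M.T (M.T y) ∈ _
              rw [hy2]; exact Submodule.zero_mem _
            · simp at hi
            · simp at hi
            · exact Submodule.subset_span ⟨0, by simp, rfl⟩
            · simp at hi
          · rw [show (![M.T y, M.T w, w, y, x1']) '' {0,1} = {M.T y, M.T w}
              by simp [Set.image_insert_eq]]
            exact hU1yw
          · rw [show (![M.T y, M.T w, w, y, x1']) '' {0,1,2} = {M.T y, M.T w, w}
              by simp [Set.image_insert_eq]]
            exact hU2span
      · -- M9 : T²y ≠ 0
        have hT2yU1 : M.T (M.T y) ∈ M.U₁ := hU1T _ hTyU1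
        have hker2 : 2 ≤ finrank k (LinearMap.ker M.T) :=
          two_le_finrank_ker M.T hT3 (by omega)
        obtain ⟨m, hmker, hmsp⟩ := exists_mem_not_mem_of_finrank_lt (LinearMap.ker M.T)
          (span k {M.T (M.T y)}) (by rw [finrank_span_singleton hy2]; omega)
        have hTm : M.T m = 0 := LinearMap.mem_ker.1 hmker
        have hmU2 : m ∈ M.U₂ := hkerU2 m hTm
        have hU1y9 : M.U₁ = span k {M.T (M.T y), M.T y} := eq_span_pair _ hT2yU1 hTyU1
          (li2 _ _ ⊥ (LinearMap.ker M.T) (LinearMap.mem_ker.2 (hT2U1 _ hTyU1))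
            (by simpa using hy2) (fun h => hy2 (LinearMap.mem_ker.1 h))) (le_of_eq r1)
        have hTyker : M.T y ∉ LinearMap.ker M.T := fun h => hy2 (LinearMap.mem_ker.1 h)
        have hmU1 : m ∉ M.U₁ := by
          intro h
          obtain ⟨a, b, hab⟩ := Submodule.mem_span_pair.1 (hU1y9 ▸ h)
          have h5 := congrArg M.T hab
          rw [map_add, map_smul, map_smul, hT2U1 _ hTyU1, smul_zero, zero_add, hTm] at h5
          have hb : b = 0 := by
            rcases smul_eq_zero.1 h5 with h' | h'
            · exact h'
            · exact absurd h' hy2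
          apply hmsp
          rw [← hab, hb, zero_smul, add_zero]
          exact Submodule.smul_mem _ _ (Submodule.mem_span_singleton_self _)
        have hU2eq9 : M.U₁ ⊔ span k {m} = M.U₂ :=
          sup_span_eq_of_codim_one _ _ _ M.le12 hmU2 hmU1 (by omega)
        obtain ⟨q, hq, z, hz, hszq⟩ := Submodule.mem_sup.1
          (show M.T x1 ∈ M.U₁ ⊔ span k {m} by rw [hU2eq9]; exact hII x1)
        obtain ⟨c, rfl⟩ := Submodule.mem_span_singleton.1 hz
        obtain ⟨a, b, habq⟩ := Submodule.mem_span_pair.1 (hU1y9 ▸ hq)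
        set x1' := x1 - a • M.T y - b • y with hx1'def
        have hTx1' : M.T x1' = c • m := by
          rw [hx1'def, map_sub, map_sub, map_smul, map_smul, ← hszq, ← habq]
          module
        have hx1'nm : x1' ∉ M.U₂ ⊔ span k {y} := by
          intro h
          apply hx1
          have h6 := Submodule.add_mem _ (Submodule.add_mem _ h
            (Submodule.mem_sup_right
              (Submodule.smul_mem _ b (Submodule.mem_span_singleton_self y))))
            (Submodule.mem_sup_left (Submodule.smul_mem _ a (M.le12 hTyU1)))
          simpa [hx1'def, sub_add_cancel] using h6
        have hU2span : M.U₂ = span k {M.T (M.T y), M.T y, m} :=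
          eq_span_triple _ (M.le12 hT2yU1) (M.le12 hTyU1) hmU2
            (li3 _ _ _ ⊥ (LinearMap.ker M.T) M.U₁
              (LinearMap.mem_ker.2 (hT2U1 _ hTyU1)) hT2yU1 hTyU1
              (by simpa using hy2) hTyker hmU1) (le_of_eq r2')
        apply master M ![M.T (M.T y), M.T y, m, y, x1']
          (li5 (M.T (M.T y)) (M.T y) m y x1' ⊥ (LinearMap.ker M.T) M.U₁ M.U₂
            (M.U₂ ⊔ span k {y})
            (LinearMap.mem_ker.2 (hT2U1 _ hTyU1)) hT2yU1 (M.le12 hT2yU1)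
            (Submodule.mem_sup_left (M.le12 hT2yU1))
            hTyU1 (M.le12 hTyU1) (Submodule.mem_sup_left (M.le12 hTyU1))
            hmU2 (Submodule.mem_sup_left hmU2)
            (Submodule.mem_sup_right (Submodule.mem_span_singleton_self _))
            (by simpa using hy2) hTyker hmU1 hyU2 hx1'nm)
          rV' ({2,4} : Set (Fin 5)) {0,1} {0,1,2} ⟨2, by simp⟩ ⟨0, by simp⟩
        · intro i hi
          fin_cases i
          · simp at hi
          · simp at hi
          · show M.T m ∈ _
            rw [hTm]; exact Submodule.zero_mem _
          · simp at hi
          · show M.T x1' ∈ _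
            rw [hTx1']
            exact Submodule.smul_mem _ _ (Submodule.subset_span ⟨2, by simp, rfl⟩)
        · intro i hi
          fin_cases i
          · show M.T (M.T (M.T y)) ∈ _
            rw [hT2U1 _ hTyU1]; exact Submodule.zero_mem _
          · exact Submodule.subset_span ⟨0, by simp, rfl⟩
          · simp at hi
          · exact Submodule.subset_span ⟨1, by simp, rfl⟩
          · simp at hi
        · rw [show (![M.T (M.T y), M.T y, m, y, x1']) '' {0,1} = {M.T (M.T y), M.T y}
            by simp [Set.image_insert_eq]]
          exact hU1y9
        · rw [show (![M.T (M.T y), M.T y, m, y, x1']) '' {0,1,2} = {M.T (M.T y), M.T y, m}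
            by simp [Set.image_insert_eq]]
          exact hU2span

end Half212

/-- Neither `(2,1,2)` nor `(1,2,1)` is the dimension type of an indecomposable system
in `S(3)`. -/
theorem no_indec_212_121_S3 (k : Type u) [Field k] :
    ¬ IsIndecDimType k 3 (2, 1, 2) ∧ ¬ IsIndecDimType k 3 (1, 2, 1) := by
  constructor
  · rintro ⟨M, hind, hdim⟩
    exact half212 M hdim hind
  · rintro ⟨M, hind, hdim⟩
    exact half121 M hdim hind
end
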